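/- Let L be a many-sorted first-order language containing an equality predicate in each sort, let Eq be the axioms of equality for L, and let R be a polarized rewrite system in L. Then the theory ⟨R, Eq⟩ is compatible with the set of axioms U_R, where U_R consists of: the axioms of equality for L; for each equational axiom t = u of E, the universal closure of the proposition t = u; for each rule P → A of R₋, the universal closure of P ⇒ A; and for each rule P → A of R₊, the universal closure of A ⇒ P. -/

import Mathlib

namespace PDM

open Classical

noncomputable section

/-- A many-sorted first-order language. -/
structure Language : Type 1 where
  Sorts : Type
  Func : Type
  arity : Func → List Sorts
  ret : Func → Sorts
  Pred : Type
  parity : Pred → List Sorts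

variable {L : Language}

/-- Well-sorted terms, with (per-sort de Bruijn style) variables. -/
inductive Term (L : Language) : L.Sorts → Type where
  | var {s : L.Sorts} (n : ℕ) : Term L s
  | func (f : L.Func)
      (args : (i : Fin (L.arity f).length) → Term L ((L.arity f).get i)) :
      Term L (L.ret f)

def Term.rename (ρ : (s : L.Sorts) → ℕ → ℕ) :
    (s : L.Sorts) → Term L s → Term L s
  | s, .var n => .var (ρ s n)
  | _, .func f args => .func f fun i => Term.rename ρ _ (args i)

def Term.subst (σ : (s : L.Sorts) → ℕ → Term L s) :
    (s : L.Sorts) → Term L s → Term L s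
  | s, .var n => σ s n
  | _, .func f args => .func f fun i => Term.subst σ _ (args i)

/-- Shift up the variables of sort `s₀`. -/
def shiftRen (s₀ : L.Sorts) : (s : L.Sorts) → ℕ → ℕ :=
  fun s n => if s = s₀ then n + 1 else n

/-- Push a renaming under a binder of sort `s₀`. -/
def liftRen (s₀ : L.Sorts) (ρ : (s : L.Sorts) → ℕ → ℕ) : (s : L.Sorts) → ℕ → ℕ :=
  fun s n =>
    if s = s₀ then
      match n with
      | 0 => 0
      | n + 1 => ρ s n + 1
    else ρ s n

/-- Push a substitution under a binder of sort `s₀`. -/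
def liftSubst (s₀ : L.Sorts) (σ : (s : L.Sorts) → ℕ → Term L s) :
    (s : L.Sorts) → ℕ → Term L s :=
  fun s n =>
    if s = s₀ then
      match n with
      | 0 => .var 0
      | n + 1 => Term.rename (shiftRen s₀) s (σ s n)
    else Term.rename (shiftRen s₀) s (σ s n)

/-- First-order propositions over `L`. -/
inductive Form (L : Language) : Type where
  | pred (p : L.Pred)
      (args : (i : Fin (L.parity p).length) → Term L ((L.parity p).get i)) : Form L
  | bot : Form L
  | top : Form L
  | not (A : Form L) : Form L
  | and (A B : Form L) : Form L
  | or (A B : Form L) : Form L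
  | imp (A B : Form L) : Form L
  | all (s : L.Sorts) (A : Form L) : Form L
  | ex (s : L.Sorts) (A : Form L) : Form L

def Form.rename : ((s : L.Sorts) → ℕ → ℕ) → Form L → Form L
  | ρ, .pred p args => .pred p fun i => Term.rename ρ _ (args i)
  | _, .bot => .bot
  | _, .top => .top
  | ρ, .not A => .not (Form.rename ρ A)
  | ρ, .and A B => .and (Form.rename ρ A) (Form.rename ρ B)
  | ρ, .or A B => .or (Form.rename ρ A) (Form.rename ρ B)
  | ρ, .imp A B => .imp (Form.rename ρ A) (Form.rename ρ B)
  | ρ, .all s A => .all s (Form.rename (liftRen s ρ) A)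
  | ρ, .ex s A => .ex s (Form.rename (liftRen s ρ) A)

def Form.subst : ((s : L.Sorts) → ℕ → Term L s) → Form L → Form L
  | σ, .pred p args => .pred p fun i => Term.subst σ _ (args i)
  | _, .bot => .bot
  | _, .top => .top
  | σ, .not A => .not (Form.subst σ A)
  | σ, .and A B => .and (Form.subst σ A) (Form.subst σ B)
  | σ, .or A B => .or (Form.subst σ A) (Form.subst σ B)
  | σ, .imp A B => .imp (Form.subst σ A) (Form.subst σ B)
  | σ, .all s A => .all s (Form.subst (liftSubst s σ) A)
  | σ, .ex s A => .ex s (Form.subst (liftSubst s σ) A)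

/-- Shift up the free variables of sort `s₀` in a proposition. -/
def Form.shift (s₀ : L.Sorts) (A : Form L) : Form L :=
  Form.rename (shiftRen s₀) A

/-- The substitution replacing the free variable `0` of sort `s` by `t`
(and shifting the other variables of sort `s` down). -/
def subst0 {s : L.Sorts} (t : Term L s) : (s' : L.Sorts) → ℕ → Term L s' :=
  fun s' n =>
    if h : s = s' then
      match n with
      | 0 => h ▸ t
      | n + 1 => .var n
    else .var n

/-- Instantiation of the body of a quantifier over sort `s` with a term `t`. -/
def Form.inst {s : L.Sorts} (t : Term L s) (A : Form L) : Form L :=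
  Form.subst (subst0 t) A

def Form.IsAtomic : Form L → Prop
  | .pred _ _ => True
  | _ => False

/-- A polarized rewrite system: equations between terms, and negative and
positive proposition rewrite rules whose left-hand sides are atomic. -/
structure PRS (L : Language) : Type 1 where
  eqns : (s : L.Sorts) → Term L s → Term L s → Prop
  neg : Form L → Form L → Prop
  pos : Form L → Form L → Prop
  neg_atomic : ∀ {P A : Form L}, neg P A → P.IsAtomic
  pos_atomic : ∀ {P A : Form L}, pos P A → P.IsAtomic

/-- The congruence on terms generated by the equations. -/
inductive EqE (rs : PRS L) : (s : L.Sorts) → Term L s → Term L s → Prop where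
  | base {s : L.Sorts} {t u : Term L s} (σ : (s : L.Sorts) → ℕ → Term L s) :
      rs.eqns s t u → EqE rs s (Term.subst σ s t) (Term.subst σ s u)
  | refl {s : L.Sorts} (t : Term L s) : EqE rs s t t
  | symm {s : L.Sorts} {t u : Term L s} : EqE rs s t u → EqE rs s u t
  | trans {s : L.Sorts} {t u v : Term L s} :
      EqE rs s t u → EqE rs s u v → EqE rs s t v
  | congr (f : L.Func)
      {args args' : (i : Fin (L.arity f).length) → Term L ((L.arity f).get i)}
      (h : ∀ i, EqE rs _ (args i) (args' i)) :
      EqE rs (L.ret f) (.func f args) (.func f args')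

mutual
  /-- One step negative rewriting. -/
  inductive RwNeg (rs : PRS L) : Form L → Form L → Prop where
    | predArg (p : L.Pred)
        (args args' : (i : Fin (L.parity p).length) → Term L ((L.parity p).get i))
        (i : Fin (L.parity p).length) :
        EqE rs _ (args i) (args' i) → (∀ j, j ≠ i → args j = args' j) →
        RwNeg rs (.pred p args) (.pred p args')
    | rule {P A : Form L} (σ : (s : L.Sorts) → ℕ → Term L s) :
        rs.neg P A → RwNeg rs (Form.subst σ P) (Form.subst σ A)
    | notC {A A' : Form L} : RwPos rs A A' → RwNeg rs (.not A) (.not A')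
    | andL {A A' B : Form L} : RwNeg rs A A' → RwNeg rs (.and A B) (.and A' B)
    | andR {A B B' : Form L} : RwNeg rs B B' → RwNeg rs (.and A B) (.and A B')
    | orL {A A' B : Form L} : RwNeg rs A A' → RwNeg rs (.or A B) (.or A' B)
    | orR {A B B' : Form L} : RwNeg rs B B' → RwNeg rs (.or A B) (.or A B')
    | impL {A A' B : Form L} : RwPos rs A A' → RwNeg rs (.imp A B) (.imp A' B)
    | impR {A B B' : Form L} : RwNeg rs B B' → RwNeg rs (.imp A B) (.imp A B')
    | allC {s : L.Sorts} {A A' : Form L} :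
        RwNeg rs A A' → RwNeg rs (.all s A) (.all s A')
    | exC {s : L.Sorts} {A A' : Form L} :
        RwNeg rs A A' → RwNeg rs (.ex s A) (.ex s A')
  /-- One step positive rewriting. -/
  inductive RwPos (rs : PRS L) : Form L → Form L → Prop where
    | predArg (p : L.Pred)
        (args args' : (i : Fin (L.parity p).length) → Term L ((L.parity p).get i))
        (i : Fin (L.parity p).length) :
        EqE rs _ (args i) (args' i) → (∀ j, j ≠ i → args j = args' j) →
        RwPos rs (.pred p args) (.pred p args')
    | rule {P A : Form L} (σ : (s : L.Sorts) → ℕ → Term L s) :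
        rs.pos P A → RwPos rs (Form.subst σ P) (Form.subst σ A)
    | notC {A A' : Form L} : RwNeg rs A A' → RwPos rs (.not A) (.not A')
    | andL {A A' B : Form L} : RwPos rs A A' → RwPos rs (.and A B) (.and A' B)
    | andR {A B B' : Form L} : RwPos rs B B' → RwPos rs (.and A B) (.and A B')
    | orL {A A' B : Form L} : RwPos rs A A' → RwPos rs (.or A B) (.or A' B)
    | orR {A B B' : Form L} : RwPos rs B B' → RwPos rs (.or A B) (.or A B')
    | impL {A A' B : Form L} : RwNeg rs A A' → RwPos rs (.imp A B) (.imp A' B)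
    | impR {A B B' : Form L} : RwPos rs B B' → RwPos rs (.imp A B) (.imp A B')
    | allC {s : L.Sorts} {A A' : Form L} :
        RwPos rs A A' → RwPos rs (.all s A) (.all s A')
    | exC {s : L.Sorts} {A A' : Form L} :
        RwPos rs A A' → RwPos rs (.ex s A) (.ex s A')
end

/-- Reflexive-transitive closure of negative rewriting: `A →₋* B`. -/
def RwNegS (rs : PRS L) : Form L → Form L → Prop := Relation.ReflTransGen (RwNeg rs)

/-- Reflexive-transitive closure of positive rewriting: `A →₊* B`. -/
def RwPosS (rs : PRS L) : Form L → Form L → Prop := Relation.ReflTransGen (RwPos rs)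

/-- One step rewriting of sequents. -/
inductive SeqRw (rs : PRS L) :
    Multiset (Form L) × Multiset (Form L) → Multiset (Form L) × Multiset (Form L) →
    Prop where
  | left {Γ Δ : Multiset (Form L)} {A A' : Form L} :
      RwNeg rs A A' → SeqRw rs (A ::ₘ Γ, Δ) (A' ::ₘ Γ, Δ)
  | right {Γ Δ : Multiset (Form L)} {A A' : Form L} :
      RwPos rs A A' → SeqRw rs (Γ, A ::ₘ Δ) (Γ, A' ::ₘ Δ)
/-- Polarized sequent calculus modulo `rs`.  `Pf rs useCut n Γ Δ` means that the
sequent `Γ ⊢ Δ` has a proof of size `n`, using the cut rule only if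
`useCut = true`. -/
inductive Pf (rs : PRS L) (useCut : Bool) :
    ℕ → Multiset (Form L) → Multiset (Form L) → Prop where
  | ax {A B P : Form L} :
      Form.IsAtomic P → RwNegS rs A P → RwPosS rs B P →
      Pf rs useCut 1 {A} {B}
  | cut {Γ Δ : Multiset (Form L)} {A B C : Form L} {n m : ℕ} :
      useCut = true → RwNegS rs A B → RwPosS rs A C →
      Pf rs useCut n (B ::ₘ Γ) Δ → Pf rs useCut m Γ (C ::ₘ Δ) →
      Pf rs useCut (n + m + 1) Γ Δ
  | contrL {Γ Δ : Multiset (Form L)} {A B C : Form L} {n : ℕ} :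
      RwNegS rs A B → RwNegS rs A C →
      Pf rs useCut n (B ::ₘ C ::ₘ Γ) Δ → Pf rs useCut (n + 1) (A ::ₘ Γ) Δ
  | contrR {Γ Δ : Multiset (Form L)} {A B C : Form L} {n : ℕ} :
      RwPosS rs A B → RwPosS rs A C →
      Pf rs useCut n Γ (B ::ₘ C ::ₘ Δ) → Pf rs useCut (n + 1) Γ (A ::ₘ Δ)
  | weakL {Γ Δ : Multiset (Form L)} {A : Form L} {n : ℕ} :
      Pf rs useCut n Γ Δ → Pf rs useCut (n + 1) (A ::ₘ Γ) Δ
  | weakR {Γ Δ : Multiset (Form L)} {A : Form L} {n : ℕ} :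
      Pf rs useCut n Γ Δ → Pf rs useCut (n + 1) Γ (A ::ₘ Δ)
  | topR {Γ Δ : Multiset (Form L)} {A : Form L} :
      RwPosS rs A .top → Pf rs useCut 1 Γ (A ::ₘ Δ)
  | botL {Γ Δ : Multiset (Form L)} {A : Form L} :
      RwNegS rs A .bot → Pf rs useCut 1 (A ::ₘ Γ) Δ
  | notL {Γ Δ : Multiset (Form L)} {A B : Form L} {n : ℕ} :
      RwNegS rs A (.not B) →
      Pf rs useCut n Γ (B ::ₘ Δ) → Pf rs useCut (n + 1) (A ::ₘ Γ) Δ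
  | notR {Γ Δ : Multiset (Form L)} {A B : Form L} {n : ℕ} :
      RwPosS rs A (.not B) →
      Pf rs useCut n (B ::ₘ Γ) Δ → Pf rs useCut (n + 1) Γ (A ::ₘ Δ)
  | andL {Γ Δ : Multiset (Form L)} {A B C : Form L} {n : ℕ} :
      RwNegS rs A (.and B C) →
      Pf rs useCut n (B ::ₘ C ::ₘ Γ) Δ → Pf rs useCut (n + 1) (A ::ₘ Γ) Δ
  | andR {Γ Δ : Multiset (Form L)} {A B C : Form L} {n m : ℕ} :
      RwPosS rs A (.and B C) →
      Pf rs useCut n Γ (B ::ₘ Δ) → Pf rs useCut m Γ (C ::ₘ Δ) →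
      Pf rs useCut (n + m + 1) Γ (A ::ₘ Δ)
  | orL {Γ Δ : Multiset (Form L)} {A B C : Form L} {n m : ℕ} :
      RwNegS rs A (.or B C) →
      Pf rs useCut n (B ::ₘ Γ) Δ → Pf rs useCut m (C ::ₘ Γ) Δ →
      Pf rs useCut (n + m + 1) (A ::ₘ Γ) Δ
  | orR {Γ Δ : Multiset (Form L)} {A B C : Form L} {n : ℕ} :
      RwPosS rs A (.or B C) →
      Pf rs useCut n Γ (B ::ₘ C ::ₘ Δ) → Pf rs useCut (n + 1) Γ (A ::ₘ Δ)
  | impL {Γ Δ : Multiset (Form L)} {A B C : Form L} {n m : ℕ} :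
      RwNegS rs A (.imp B C) →
      Pf rs useCut n Γ (B ::ₘ Δ) → Pf rs useCut m (C ::ₘ Γ) Δ →
      Pf rs useCut (n + m + 1) (A ::ₘ Γ) Δ
  | impR {Γ Δ : Multiset (Form L)} {A B C : Form L} {n : ℕ} :
      RwPosS rs A (.imp B C) →
      Pf rs useCut n (B ::ₘ Γ) (C ::ₘ Δ) → Pf rs useCut (n + 1) Γ (A ::ₘ Δ)
  | allL {Γ Δ : Multiset (Form L)} {s : L.Sorts} {t : Term L s} {A B C : Form L}
      {n : ℕ} :
      RwNegS rs A (.all s B) → RwNegS rs (Form.inst t B) C →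
      Pf rs useCut n (C ::ₘ Γ) Δ → Pf rs useCut (n + 1) (A ::ₘ Γ) Δ
  | allR {Γ Δ : Multiset (Form L)} {s : L.Sorts} {A B : Form L} {n : ℕ} :
      RwPosS rs A (.all s B) →
      Pf rs useCut n (Γ.map (Form.shift s)) (B ::ₘ Δ.map (Form.shift s)) →
      Pf rs useCut (n + 1) Γ (A ::ₘ Δ)
  | exL {Γ Δ : Multiset (Form L)} {s : L.Sorts} {A B : Form L} {n : ℕ} :
      RwNegS rs A (.ex s B) →
      Pf rs useCut n (B ::ₘ Γ.map (Form.shift s)) (Δ.map (Form.shift s)) →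
      Pf rs useCut (n + 1) (A ::ₘ Γ) Δ
  | exR {Γ Δ : Multiset (Form L)} {s : L.Sorts} {t : Term L s} {A B C : Form L}
      {n : ℕ} :
      RwPosS rs A (.ex s B) → RwPosS rs (Form.inst t B) C →
      Pf rs useCut n Γ (C ::ₘ Δ) → Pf rs useCut (n + 1) Γ (A ::ₘ Δ)

/-- The sequent `Γ ⊢ Δ` is provable modulo `rs`. -/
def Provable (rs : PRS L) (Γ Δ : Multiset (Form L)) : Prop :=
  ∃ n, Pf rs true n Γ Δ

/-- The sequent `Γ ⊢ Δ` has a cut free proof modulo `rs`. -/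
def CutFreeProvable (rs : PRS L) (Γ Δ : Multiset (Form L)) : Prop :=
  ∃ n, Pf rs false n Γ Δ

/-- The sequent `Γ ⊢ Δ` is provable in the set of axioms `T` modulo `rs`:
some finite multiset of axioms of `T` can be added on the left. -/
def ProvableIn (rs : PRS L) (T : Set (Form L)) (Γ Δ : Multiset (Form L)) : Prop :=
  ∃ T' : Multiset (Form L), (∀ A ∈ T', A ∈ T) ∧ Provable rs (Γ + T') Δ

/-- The empty rewrite system; provability modulo it is ordinary provability in
classical first-order predicate logic. -/
def emptyPRS (L : Language) : PRS L where
  eqns := fun _ _ _ => False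
  neg := fun _ _ => False
  pos := fun _ _ => False
  neg_atomic := fun h => h.elim
  pos_atomic := fun h => h.elim

/-- Provability in predicate logic from a set of axioms `U`. -/
def PLProvableIn (U : Set (Form L)) (Γ Δ : Multiset (Form L)) : Prop :=
  ProvableIn (emptyPRS L) U Γ Δ

/-- Compatibility of the theory `⟨rs, T⟩` with the set of axioms `U`. -/
structure Compatible (rs : PRS L) (T U : Set (Form L)) : Prop where
  rwNeg : ∀ A B : Form L, RwNegS rs A B → PLProvableIn U 0 {Form.imp A B}
  rwPos : ∀ A B : Form L, RwPosS rs A B → PLProvableIn U 0 {Form.imp B A}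
  axT : ∀ A ∈ T, PLProvableIn U 0 {A}
  axU : ∀ A ∈ U, ProvableIn rs T 0 {A}
/-- The list of (sort, index) free variables of a term. -/
def Term.freeList : (s : L.Sorts) → Term L s → List ((s : L.Sorts) × ℕ)
  | s, .var n => [⟨s, n⟩]
  | _, .func f args =>
      (List.finRange (L.arity f).length).flatMap fun i => Term.freeList _ (args i)

/-- Adjusting a list of free variables when leaving a binder of sort `s`. -/
def unbind (s : L.Sorts) (l : List ((s : L.Sorts) × ℕ)) :
    List ((s : L.Sorts) × ℕ) :=
  (l.filter fun v => decide ¬(v.1 = s ∧ v.2 = 0)).map fun v =>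
    if v.1 = s then ⟨v.1, v.2 - 1⟩ else v

/-- The list of (sort, index) free variables of a proposition. -/
def Form.freeList : Form L → List ((s : L.Sorts) × ℕ)
  | .pred p args =>
      (List.finRange (L.parity p).length).flatMap fun i => Term.freeList _ (args i)
  | .bot => []
  | .top => []
  | .not A => A.freeList
  | .and A B => A.freeList ++ B.freeList
  | .or A B => A.freeList ++ B.freeList
  | .imp A B => A.freeList ++ B.freeList
  | .all s A => unbind s A.freeList
  | .ex s A => unbind s A.freeList

/-- Universally quantify over the free variable `k` of sort `s`. -/
def Form.abstractVar (s : L.Sorts) (k : ℕ) (A : Form L) : Form L :=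
  .all s (A.subst fun s' n =>
    if s' = s then (if n = k then .var 0 else .var (n + 1)) else .var n)

def closeSteps : ℕ → Form L → Form L
  | 0, A => A
  | n + 1, A =>
    match A.freeList with
    | [] => A
    | v :: _ => closeSteps n (A.abstractVar v.1 v.2)

/-- The universal closure of a proposition. -/
def univClosure (A : Form L) : Form L := closeSteps A.freeList.length A

/-- The set of axioms `A_R` associated with a polarized rewrite system. -/
def axSetAR (rs : PRS L) : Set (Form L) :=
  {C | ∃ A B : Form L, RwNegS rs A B ∧ C = univClosure (A.imp B)} ∪
  {C | ∃ A B : Form L, RwPosS rs A B ∧ C = univClosure (B.imp A)}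

/-- A (many-sorted, classical) first-order model of the language `L`. -/
structure Model (L : Language) : Type 1 where
  dom : L.Sorts → Type
  inhab : ∀ s, Nonempty (dom s)
  interpF : (f : L.Func) →
      ((i : Fin (L.arity f).length) → dom ((L.arity f).get i)) → dom (L.ret f)
  interpP : (p : L.Pred) →
      ((i : Fin (L.parity p).length) → dom ((L.parity p).get i)) → Prop

/-- Valuations of the variables in a model. -/
def Model.Val (M : Model L) : Type := (s : L.Sorts) → ℕ → M.dom s

/-- Denotation of terms. -/
def Model.evalT (M : Model L) (φ : M.Val) : (s : L.Sorts) → Term L s → M.dom s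
  | s, .var n => φ s n
  | _, .func f args => M.interpF f fun i => M.evalT φ _ (args i)

/-- Pushing a new value for the variable `0` of sort `s` into a valuation. -/
def Model.push (M : Model L) (φ : M.Val) {s : L.Sorts} (d : M.dom s) : M.Val :=
  fun s' n =>
    if h : s = s' then
      match n with
      | 0 => h ▸ d
      | n + 1 => φ s' n
    else φ s' n

/-- Denotation (truth value) of propositions. -/
def Model.evalF (M : Model L) : M.Val → Form L → Prop
  | φ, .pred p args => M.interpP p fun i => M.evalT φ _ (args i)
  | _, .bot => False
  | _, .top => True
  | φ, .not A => ¬ M.evalF φ A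
  | φ, .and A B => M.evalF φ A ∧ M.evalF φ B
  | φ, .or A B => M.evalF φ A ∨ M.evalF φ B
  | φ, .imp A B => M.evalF φ A → M.evalF φ B
  | φ, .all s A => ∀ d : M.dom s, M.evalF (M.push φ d) A
  | φ, .ex s A => ∃ d : M.dom s, M.evalF (M.push φ d) A

/-- A proposition is valid in a model. -/
def Model.ValidForm (M : Model L) (A : Form L) : Prop := ∀ φ : M.Val, M.evalF φ A

/-- A sequent is valid in a model. -/
def Model.ValidSeq (M : Model L) (Γ Δ : Multiset (Form L)) : Prop :=
  ∀ φ : M.Val, (∀ A ∈ Γ, M.evalF φ A) → ∃ B ∈ Δ, M.evalF φ B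

/-- `M` is a model of a set of axioms. -/
def IsModelOf (M : Model L) (S : Set (Form L)) : Prop := ∀ A ∈ S, M.ValidForm A

/-- `M` is a model of the theory `⟨rs, T⟩`, i.e. a model of `A_R ∪ T`. -/
def IsModelOfTheory (M : Model L) (rs : PRS L) (T : Set (Form L)) : Prop :=
  IsModelOf M (axSetAR rs ∪ T)

/-- An equality model: terms congruent modulo `=_E` have the same denotation. -/
def IsEqualityModel (M : Model L) (rs : PRS L) : Prop :=
  ∀ (s : L.Sorts) (t u : Term L s), EqE rs s t u →
    ∀ φ : M.Val, M.evalT φ s t = M.evalT φ s u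

/-- The relation `∼` on a domain of a model: being denotations of two
`=_E`-congruent terms. -/
def simRel (rs : PRS L) (M : Model L) (s : L.Sorts) (a b : M.dom s) : Prop :=
  ∃ (t u : Term L s) (φ : M.Val),
    EqE rs s t u ∧ a = M.evalT φ s t ∧ b = M.evalT φ s u

/-- A literal: an atomic proposition or the negation of an atomic one. -/
def Form.IsLiteral (A : Form L) : Prop :=
  A.IsAtomic ∨ ∃ B : Form L, B.IsAtomic ∧ A = .not B

/-- Disjunctions of literals. -/
inductive IsDisj : Form L → Prop where
  | lit {A : Form L} : A.IsLiteral → IsDisj A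
  | or {A B : Form L} : IsDisj A → IsDisj B → IsDisj (.or A B)

/-- Universally quantified disjunctions of literals. -/
inductive IsQuantClause : Form L → Prop where
  | disj {A : Form L} : IsDisj A → IsQuantClause A
  | all {s : L.Sorts} {A : Form L} : IsQuantClause A → IsQuantClause (.all s A)

/-- A clausal proposition: `⊥` or `∀x₁…∀xₚ (L₁ ∨ … ∨ Lₙ)`. -/
def Form.IsClausal (A : Form L) : Prop := A = .bot ∨ IsQuantClause A

/-- A clausal polarized rewrite system. -/
def IsClausalSystem (rs : PRS L) : Prop :=
  (∀ P A : Form L, rs.neg P A → P.IsAtomic ∧ A.IsClausal) ∧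
  (∀ P A : Form L, rs.pos P A → P.IsAtomic ∧ ∃ B : Form L, B.IsClausal ∧ A = .not B)
/-- The language obtained by adding an equality predicate in each sort. -/
def withEq (L : Language) : Language where
  Sorts := L.Sorts
  Func := L.Func
  arity := L.arity
  ret := L.ret
  Pred := L.Pred ⊕ L.Sorts
  parity := fun p =>
    match p with
    | .inl p => L.parity p
    | .inr s => [s, s]

/-- The canonical embedding of terms of `L` into `withEq L`. -/
def Term.toEq : (s : L.Sorts) → Term L s → Term (withEq L) s
  | _, .var n => .var n
  | _, .func f args =>
      Term.func (L := withEq L) f fun i => Term.toEq _ (args i)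

/-- The canonical embedding of propositions of `L` into `withEq L`. -/
def Form.toEq : Form L → Form (withEq L)
  | .pred p args => Form.pred (L := withEq L) (.inl p) fun i => Term.toEq (L := L) _ (args i)
  | .bot => .bot
  | .top => .top
  | .not A => .not A.toEq
  | .and A B => .and A.toEq B.toEq
  | .or A B => .or A.toEq B.toEq
  | .imp A B => .imp A.toEq B.toEq
  | .all s A => .all s A.toEq
  | .ex s A => .ex s A.toEq

/-- The rewrite system `rs` viewed as a rewrite system of `withEq L`. -/
def PRS.toEq (rs : PRS L) : PRS (withEq L) where
  eqns := fun s t u =>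
    ∃ t₀ u₀ : Term L s, rs.eqns s t₀ u₀ ∧ t = Term.toEq (L := L) s t₀ ∧ u = Term.toEq (L := L) s u₀
  neg := fun P A => ∃ P₀ A₀ : Form L, rs.neg P₀ A₀ ∧ P = P₀.toEq ∧ A = A₀.toEq
  pos := fun P A => ∃ P₀ A₀ : Form L, rs.pos P₀ A₀ ∧ P = P₀.toEq ∧ A = A₀.toEq
  neg_atomic := by
    rintro P A ⟨P₀, A₀, h, rfl, rfl⟩
    have h' := rs.neg_atomic h
    cases P₀ <;> simp_all [Form.IsAtomic, Form.toEq]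
  pos_atomic := by
    rintro P A ⟨P₀, A₀, h, rfl, rfl⟩
    have h' := rs.pos_atomic h
    cases P₀ <;> simp_all [Form.IsAtomic, Form.toEq]

/-- A two-element family of arguments. -/
def args2 {L' : Language} {s₁ s₂ : L'.Sorts} (t : Term L' s₁) (u : Term L' s₂) :
    (i : Fin ([s₁, s₂] : List L'.Sorts).length) →
      Term L' (([s₁, s₂] : List L'.Sorts).get i)
  | ⟨0, _⟩ => t
  | ⟨1, _⟩ => u

/-- A one-element family of arguments. -/
def args1 {L' : Language} {s : L'.Sorts} (t : Term L' s) :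
    (i : Fin ([s] : List L'.Sorts).length) → Term L' (([s] : List L'.Sorts).get i)
  | ⟨0, _⟩ => t

/-- The proposition `t = u` in `withEq L`. -/
def eqForm {s : L.Sorts} (t u : Term (withEq L) s) : Form (withEq L) :=
  .pred (.inr s) (args2 t u)

/-- Hypothesis `x₁ = y₁ ∧ … ∧ xₙ = yₙ` for the congruence axiom of a function
symbol, where `xᵢ` is the variable `2i` and `yᵢ` the variable `2i+1`. -/
def congrHypF (f : L.Func) : Form (withEq L) :=
  (List.finRange (L.arity f).length).foldr
    (fun i C => .and (eqForm (s := (L.arity f).get i)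
      (.var (2 * i.val)) (.var (2 * i.val + 1))) C) .top

/-- The congruence axiom for a function symbol. -/
def funcCongrAx (f : L.Func) : Form (withEq L) :=
  univClosure ((congrHypF f).imp
    (eqForm (Term.func (L := withEq L) f fun i => .var (2 * i.val))
            (Term.func (L := withEq L) f fun i => .var (2 * i.val + 1))))

/-- Hypothesis for the congruence axiom of a predicate symbol of `withEq L`. -/
def congrHypP (p : (withEq L).Pred) : Form (withEq L) :=
  (List.finRange ((withEq L).parity p).length).foldr
    (fun i C => .and (eqForm (s := ((withEq L).parity p).get i)
      (.var (2 * i.val)) (.var (2 * i.val + 1))) C) .top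

/-- The congruence (Leibniz) axiom for a predicate symbol. -/
def predCongrAx (p : (withEq L).Pred) : Form (withEq L) :=
  univClosure ((congrHypP p).imp
    ((Form.pred p fun i => .var (2 * i.val)).imp
      (Form.pred p fun i => .var (2 * i.val + 1))))

/-- The axioms of equality for the language `withEq L`. -/
def EqAxioms (L : Language) : Set (Form (withEq L)) :=
  {C | ∃ s : L.Sorts,
      C = univClosure (eqForm (s := s) (.var 0) (.var 0))} ∪
  {C | ∃ s : L.Sorts,
      C = univClosure ((eqForm (s := s) (.var 0) (.var 1)).imp
        (eqForm (s := s) (.var 1) (.var 0)))} ∪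
  {C | ∃ s : L.Sorts,
      C = univClosure ((Form.and (eqForm (s := s) (.var 0) (.var 1))
        (eqForm (s := s) (.var 1) (.var 2))).imp
          (eqForm (s := s) (.var 0) (.var 2)))} ∪
  {C | ∃ f : L.Func, C = funcCongrAx f} ∪
  {C | ∃ p : (withEq L).Pred, C = predCongrAx p}

/-- The set of axioms `U_R` associated with a polarized rewrite system over a
language with equality. -/
def URset {L₀ : Language} (rs : PRS (withEq L₀)) : Set (Form (withEq L₀)) :=
  EqAxioms L₀ ∪
  {C | ∃ (s : L₀.Sorts) (t u : Term (withEq L₀) s),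
      rs.eqns s t u ∧ C = univClosure (eqForm t u)} ∪
  {C | ∃ P A : Form (withEq L₀), rs.neg P A ∧ C = univClosure (P.imp A)} ∪
  {C | ∃ P A : Form (withEq L₀), rs.pos P A ∧ C = univClosure (A.imp P)}
/-! ### Simple Type Theory: the theories HOL and HOL± -/

/-- Simple types. -/
inductive STy : Type where
  | iota : STy
  | o : STy
  | arr (T U : STy) : STy

/-- The function symbols of HOL. -/
inductive HFunc : Type where
  | K (T U : STy) : HFunc
  | S (T U V : STy) : HFunc
  | dor : HFunc
  | dnot : HFunc
  | dall (T : STy) : HFunc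
  | zero : HFunc
  | succ : HFunc
  | pred : HFunc
  | null : HFunc
  | app (T U : STy) : HFunc

def HFunc.arity : HFunc → List STy
  | .app T U => [.arr T U, T]
  | _ => []

def HFunc.ret : HFunc → STy
  | .K T U => .arr T (.arr U T)
  | .S T U V => .arr (.arr T (.arr U V)) (.arr (.arr T U) (.arr T V))
  | .dor => .arr .o (.arr .o .o)
  | .dnot => .arr .o .o
  | .dall T => .arr (.arr T .o) .o
  | .zero => .iota
  | .succ => .arr .iota .iota
  | .pred => .arr .iota .iota
  | .null => .arr .iota .o
  | .app _ U => U

/-- The language of HOL: sorts are simple types, and `ε` is the unique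
predicate symbol, of rank `⟨o⟩`. -/
def LHOL : Language where
  Sorts := STy
  Func := HFunc
  arity := HFunc.arity
  ret := HFunc.ret
  Pred := Unit
  parity := fun _ => [STy.o]

/-- The language of HOL±: that of HOL plus a symbol `H_T` of sort
`(T → o) → T` for each sort `T`. -/
def LHOLpm : Language where
  Sorts := STy
  Func := HFunc ⊕ STy
  arity := fun f =>
    match f with
    | .inl f => f.arity
    | .inr T => [STy.arr T STy.o]
  ret := fun f =>
    match f with
    | .inl f => f.ret
    | .inr T => T
  Pred := Unit
  parity := fun _ => [STy.o]

/-- Application in HOL. -/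
def hap {T U : STy} (t : Term LHOL (STy.arr T U)) (u : Term LHOL T) :
    Term LHOL U :=
  Term.func (L := LHOL) (HFunc.app T U) (args2 (L' := LHOL) t u)

/-- Application in HOL±. -/
def pap {T U : STy} (t : Term LHOLpm (STy.arr T U)) (u : Term LHOLpm T) :
    Term LHOLpm U :=
  Term.func (L := LHOLpm) (Sum.inl (HFunc.app T U)) (args2 (L' := LHOLpm) t u)

/-- The Hilbert symbol `H_T` applied to a term, in HOL±. -/
def hH (T : STy) (t : Term LHOLpm (STy.arr T STy.o)) : Term LHOLpm T :=
  Term.func (L := LHOLpm) (Sum.inr T) (args1 (L' := LHOLpm) t)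

/-- The constants of HOL. -/
def hK (T U : STy) : Term LHOL (HFunc.ret (.K T U)) :=
  Term.func (L := LHOL) (HFunc.K T U) finZeroElim
def hS (T U V : STy) : Term LHOL (HFunc.ret (.S T U V)) :=
  Term.func (L := LHOL) (HFunc.S T U V) finZeroElim
def hOr : Term LHOL (HFunc.ret .dor) :=
  Term.func (L := LHOL) HFunc.dor finZeroElim
def hNot : Term LHOL (HFunc.ret .dnot) :=
  Term.func (L := LHOL) HFunc.dnot finZeroElim
def hAll (T : STy) : Term LHOL (HFunc.ret (.dall T)) :=
  Term.func (L := LHOL) (HFunc.dall T) finZeroElim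
def hZero : Term LHOL (HFunc.ret .zero) :=
  Term.func (L := LHOL) HFunc.zero finZeroElim
def hSucc : Term LHOL (HFunc.ret .succ) :=
  Term.func (L := LHOL) HFunc.succ finZeroElim
def hPred : Term LHOL (HFunc.ret .pred) :=
  Term.func (L := LHOL) HFunc.pred finZeroElim
def hNull : Term LHOL (HFunc.ret .null) :=
  Term.func (L := LHOL) HFunc.null finZeroElim

/-- The constants of HOL±. -/
def pK (T U : STy) : Term LHOLpm (HFunc.ret (.K T U)) :=
  Term.func (L := LHOLpm) (Sum.inl (HFunc.K T U)) finZeroElim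
def pS (T U V : STy) : Term LHOLpm (HFunc.ret (.S T U V)) :=
  Term.func (L := LHOLpm) (Sum.inl (HFunc.S T U V)) finZeroElim
def pOr : Term LHOLpm (HFunc.ret .dor) :=
  Term.func (L := LHOLpm) (Sum.inl HFunc.dor) finZeroElim
def pNot : Term LHOLpm (HFunc.ret .dnot) :=
  Term.func (L := LHOLpm) (Sum.inl HFunc.dnot) finZeroElim
def pAll (T : STy) : Term LHOLpm (HFunc.ret (.dall T)) :=
  Term.func (L := LHOLpm) (Sum.inl (HFunc.dall T)) finZeroElim
def pZero : Term LHOLpm (HFunc.ret .zero) :=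
  Term.func (L := LHOLpm) (Sum.inl HFunc.zero) finZeroElim
def pSucc : Term LHOLpm (HFunc.ret .succ) :=
  Term.func (L := LHOLpm) (Sum.inl HFunc.succ) finZeroElim
def pPred : Term LHOLpm (HFunc.ret .pred) :=
  Term.func (L := LHOLpm) (Sum.inl HFunc.pred) finZeroElim
def pNull : Term LHOLpm (HFunc.ret .null) :=
  Term.func (L := LHOLpm) (Sum.inl HFunc.null) finZeroElim

/-- The proposition `ε(t)` of HOL. -/
def hEps (t : Term LHOL STy.o) : Form LHOL :=
  Form.pred (L := LHOL) () (args1 (L' := LHOL) t)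

/-- The proposition `ε(t)` of HOL±. -/
def pEps (t : Term LHOLpm STy.o) : Form LHOLpm :=
  Form.pred (L := LHOLpm) () (args1 (L' := LHOLpm) t)

/-- The equations of HOL (and of HOL±), on the language of HOL. -/
inductive HOLEq : (s : STy) → Term LHOL s → Term LHOL s → Prop where
  | Keq (T U : STy) :
      HOLEq T (hap (hap (hK T U) (.var 0)) (.var 1)) (.var 0)
  | Seq (T U V : STy) :
      HOLEq V (hap (hap (hap (hS T U V) (.var 0)) (.var 1)) (.var 2))
        (hap (hap (.var 0) (.var 2)) (hap (.var 1) (.var 2)))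
  | PredSucc :
      HOLEq .iota (hap (hPred) (hap (hSucc) (.var 0))) (.var 0)

/-- The rewrite rules of HOL (used both negatively and positively). -/
inductive HOLRule : Form LHOL → Form LHOL → Prop where
  | orRule :
      HOLRule (hEps (hap (hap (hOr) (.var 0)) (.var 1)))
        (.or (hEps (.var 0)) (hEps (.var 1)))
  | notRule :
      HOLRule (hEps (hap (hNot) (.var 0))) (.not (hEps (.var 0)))
  | allRule (T : STy) :
      HOLRule (hEps (hap (hAll T) (.var 0)))
        (.all T (hEps (hap (.var 0) (.var 0))))
  | nullSucc :
      HOLRule (hEps (hap (hNull) (hap (hSucc) (.var 0)))) .bot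
  | nullZero :
      HOLRule (hEps (hap (hNull) (hZero))) .top

/-- The (non polarized) rewrite system HOL, each rule being taken both as a
negative and as a positive rule. -/
def HOLsys : PRS LHOL where
  eqns := HOLEq
  neg := HOLRule
  pos := HOLRule
  neg_atomic := by rintro P A h; cases h <;> trivial
  pos_atomic := by rintro P A h; cases h <;> trivial

/-- The equations of HOL±. -/
inductive HOLpmEq : (s : STy) → Term LHOLpm s → Term LHOLpm s → Prop where
  | Keq (T U : STy) :
      HOLpmEq T (pap (pap (pK T U) (.var 0)) (.var 1)) (.var 0)
  | Seq (T U V : STy) :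
      HOLpmEq V (pap (pap (pap (pS T U V) (.var 0)) (.var 1)) (.var 2))
        (pap (pap (.var 0) (.var 2)) (pap (.var 1) (.var 2)))
  | PredSucc :
      HOLpmEq .iota (pap (pPred) (pap (pSucc) (.var 0))) (.var 0)

/-- The negative rules of HOL±. -/
inductive HOLpmNeg : Form LHOLpm → Form LHOLpm → Prop where
  | orRule :
      HOLpmNeg (pEps (pap (pap (pOr) (.var 0)) (.var 1)))
        (.or (pEps (.var 0)) (pEps (.var 1)))
  | notRule :
      HOLpmNeg (pEps (pap (pNot) (.var 0))) (.not (pEps (.var 0)))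
  | allRule (T : STy) :
      HOLpmNeg (pEps (pap (pAll T) (.var 0)))
        (.all T (pEps (pap (.var 0) (.var 0))))
  | nullSucc :
      HOLpmNeg (pEps (pap (pNull) (pap (pSucc) (.var 0)))) .bot

/-- The positive rules of HOL±. -/
inductive HOLpmPos : Form LHOLpm → Form LHOLpm → Prop where
  | orRule₁ :
      HOLpmPos (pEps (pap (pap (pOr) (.var 0)) (.var 1)))
        (.not (.not (pEps (.var 0))))
  | orRule₂ :
      HOLpmPos (pEps (pap (pap (pOr) (.var 0)) (.var 1)))
        (.not (.not (pEps (.var 1))))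
  | notRule :
      HOLpmPos (pEps (pap (pNot) (.var 0))) (.not (pEps (.var 0)))
  | allRule (T : STy) :
      HOLpmPos (pEps (pap (pAll T) (.var 0)))
        (.not (.not (pEps (pap (.var 0) (hH T (.var 0))))))
  | nullZero :
      HOLpmPos (pEps (pap (pNull) (pZero))) (.not .bot)

/-- The clausal polarized rewrite system HOL±. -/
def HOLpm : PRS LHOLpm where
  eqns := HOLpmEq
  neg := HOLpmNeg
  pos := HOLpmPos
  neg_atomic := by rintro P A h; cases h <;> trivial
  pos_atomic := by rintro P A h; cases h <;> trivial

/-- The embedding of the terms of HOL into those of HOL±. -/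
def embT : (s : STy) → Term LHOL s → Term LHOLpm s
  | _, .var n => .var n
  | _, .func f args => Term.func (L := LHOLpm) (Sum.inl f) fun i => embT _ (args i)

/-- The embedding of the propositions of HOL into those of HOL±; a proposition
of HOL± contains no occurrence of the symbols `H_T` if and only if it is in the
image of this embedding. -/
def embF : Form LHOL → Form LHOLpm
  | .pred _ args => Form.pred (L := LHOLpm) () fun i => embT _ (args i)
  | .bot => .bot
  | .top => .top
  | .not A => .not (embF A)
  | .and A B => .and (embF A) (embF B)
  | .or A B => .or (embF A) (embF B)
  | .imp A B => .imp (embF A) (embF B)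
  | .all s A => .all s (embF A)
  | .ex s A => .ex s (embF A)

/-! ### Infrastructure: substitution calculus -/

/-- Composition of substitutions. -/
def compS (σ' σ : (s : L.Sorts) → ℕ → Term L s) : (s : L.Sorts) → ℕ → Term L s :=
  fun s n => Term.subst σ' s (σ s n)

/-- The identity substitution. -/
def idS : (s : L.Sorts) → ℕ → Term L s := fun _ n => .var n

/-- Renaming as a substitution. -/
def renS (ρ : (s : L.Sorts) → ℕ → ℕ) : (s : L.Sorts) → ℕ → Term L s :=
  fun s n => .var (ρ s n)

theorem Term.rename_eq_subst (ρ : (s : L.Sorts) → ℕ → ℕ) (s : L.Sorts)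
    (t : Term L s) : Term.rename ρ s t = Term.subst (renS ρ) s t := by
  induction t with
  | var n => rfl
  | func f args ih => simp only [Term.rename, Term.subst]; exact congrArg _ (funext ih)

theorem liftSubst_renS (s : L.Sorts) (ρ : (s : L.Sorts) → ℕ → ℕ) :
    liftSubst s (renS ρ) = renS (liftRen s ρ) := by
  funext s' n
  simp only [liftSubst, renS, liftRen]
  split
  · cases n <;> simp [Term.rename, shiftRen, *]
  · simp [Term.rename, shiftRen, *]

theorem Form.rename_eq_subst (ρ : (s : L.Sorts) → ℕ → ℕ) (A : Form L) :
    Form.rename ρ A = Form.subst (renS ρ) A := by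
  induction A generalizing ρ with
  | pred p args => simp only [Form.rename, Form.subst]
                   exact congrArg _ (funext fun i => Term.rename_eq_subst ρ _ (args i))
  | bot => rfl
  | top => rfl
  | not A ih => simp only [Form.rename, Form.subst, ih]
  | and A B ihA ihB => simp only [Form.rename, Form.subst, ihA, ihB]
  | or A B ihA ihB => simp only [Form.rename, Form.subst, ihA, ihB]
  | imp A B ihA ihB => simp only [Form.rename, Form.subst, ihA, ihB]
  | all s A ih => simp only [Form.rename, Form.subst, ih, liftSubst_renS]
  | ex s A ih => simp only [Form.rename, Form.subst, ih, liftSubst_renS]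

theorem Term.subst_comp (σ' σ : (s : L.Sorts) → ℕ → Term L s) (s : L.Sorts)
    (t : Term L s) :
    Term.subst σ' s (Term.subst σ s t) = Term.subst (compS σ' σ) s t := by
  induction t with
  | var n => rfl
  | func f args ih => simp only [Term.subst]; exact congrArg _ (funext ih)

theorem Term.subst_id (s : L.Sorts) (t : Term L s) :
    Term.subst idS s t = t := by
  induction t with
  | var n => rfl
  | func f args ih => simp only [Term.subst]; exact congrArg _ (funext ih)

theorem subst_rename_shift (s₀ : L.Sorts) (σ : (s : L.Sorts) → ℕ → Term L s)
    (s : L.Sorts) (t : Term L s) :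
    Term.subst (liftSubst s₀ σ) s (Term.rename (shiftRen s₀) s t) =
      Term.rename (shiftRen s₀) s (Term.subst σ s t) := by
  rw [Term.rename_eq_subst, Term.rename_eq_subst, Term.subst_comp, Term.subst_comp]
  congr 1
  funext s' n
  by_cases h : s' = s₀
  · subst h
    simp [compS, renS, Term.subst, liftSubst, shiftRen, Term.rename_eq_subst]
  · simp [compS, renS, Term.subst, liftSubst, shiftRen, h, Term.rename_eq_subst]

theorem liftSubst_comp (s : L.Sorts) (σ' σ : (s : L.Sorts) → ℕ → Term L s) :
    liftSubst s (compS σ' σ) = compS (liftSubst s σ') (liftSubst s σ) := by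
  funext s' n
  by_cases h : s' = s
  · subst h
    cases n with
    | zero => simp [Term.subst, liftSubst, compS]
    | succ n => simp only [liftSubst, compS, if_pos rfl]
                exact (subst_rename_shift _ σ' _ (σ _ n)).symm
  · simp only [liftSubst, compS, if_neg h]
    exact (subst_rename_shift s σ' _ (σ s' n)).symm

theorem Form.subst_comp (σ' σ : (s : L.Sorts) → ℕ → Term L s) (A : Form L) :
    Form.subst σ' (Form.subst σ A) = Form.subst (compS σ' σ) A := by
  induction A generalizing σ' σ with
  | pred p args => simp only [Form.subst]
                   exact congrArg _ (funext fun i => Term.subst_comp σ' σ _ (args i))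
  | bot => rfl
  | top => rfl
  | not A ih => simp only [Form.subst, ih]
  | and A B ihA ihB => simp only [Form.subst, ihA, ihB]
  | or A B ihA ihB => simp only [Form.subst, ihA, ihB]
  | imp A B ihA ihB => simp only [Form.subst, ihA, ihB, liftSubst_comp]
  | all s A ih => simp only [Form.subst, ih, liftSubst_comp]
  | ex s A ih => simp only [Form.subst, ih, liftSubst_comp]

theorem liftSubst_id (s : L.Sorts) : liftSubst s (idS : (s : L.Sorts) → ℕ → Term L s) = idS := by
  funext s' n
  simp only [liftSubst, idS]
  split
  · cases n <;> simp [Term.rename, shiftRen, *]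
  · simp [Term.rename, shiftRen, *]

theorem Form.subst_id (A : Form L) : Form.subst idS A = A := by
  induction A with
  | pred p args => simp only [Form.subst]
                   exact congrArg _ (funext fun i => Term.subst_id _ (args i))
  | bot => rfl
  | top => rfl
  | not A ih => simp only [Form.subst, ih]
  | and A B ihA ihB => simp only [Form.subst, ihA, ihB]
  | or A B ihA ihB => simp only [Form.subst, ihA, ihB]
  | imp A B ihA ihB => simp only [Form.subst, ihA, ihB]
  | all s A ih => simp only [Form.subst, liftSubst_id, ih]
  | ex s A ih => simp only [Form.subst, liftSubst_id, ih]

/-! ### Infrastructure: free variables and closedness -/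

theorem Term.freeList_rename (ρ : (s : L.Sorts) → ℕ → ℕ) (s : L.Sorts) (t : Term L s) :
    Term.freeList s (Term.rename ρ s t) =
      (Term.freeList s t).map (fun v => ⟨v.1, ρ v.1 v.2⟩) := by
  induction t with
  | var n => rfl
  | func f args ih =>
    simp only [Term.rename, Term.freeList, List.map_flatMap]
    exact List.flatMap_congr (fun i _ => ih i)

theorem unbind_map (s : L.Sorts) (ρ : (s : L.Sorts) → ℕ → ℕ)
    (l : List ((s : L.Sorts) × ℕ)) :
    unbind s (l.map fun v => ⟨v.1, liftRen s ρ v.1 v.2⟩) =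
      (unbind s l).map (fun v => ⟨v.1, ρ v.1 v.2⟩) := by
  induction l with
  | nil => rfl
  | cons v l ih =>
    obtain ⟨s', n⟩ := v
    by_cases h : s' = s
    · subst h
      cases n with
      | zero => simpa [unbind, liftRen, List.filter_cons] using ih
      | succ n => simpa [unbind, liftRen, List.filter_cons] using ih
    · simpa [unbind, liftRen, h, List.filter_cons] using ih

theorem Form.freeList_rename (ρ : (s : L.Sorts) → ℕ → ℕ) (A : Form L) :
    (Form.rename ρ A).freeList = A.freeList.map (fun v => ⟨v.1, ρ v.1 v.2⟩) := by
  induction A generalizing ρ with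
  | pred p args =>
    simp only [Form.rename, Form.freeList, List.map_flatMap]
    exact List.flatMap_congr (fun i _ => Term.freeList_rename ρ _ (args i))
  | bot => rfl
  | top => rfl
  | not A ih => simp only [Form.rename, Form.freeList, ih]
  | and A B ihA ihB => simp only [Form.rename, Form.freeList, ihA, ihB, List.map_append]
  | or A B ihA ihB => simp only [Form.rename, Form.freeList, ihA, ihB, List.map_append]
  | imp A B ihA ihB => simp only [Form.rename, Form.freeList, ihA, ihB, List.map_append]
  | all s A ih => simp only [Form.rename, Form.freeList, ih, unbind_map]
  | ex s A ih => simp only [Form.rename, Form.freeList, ih, unbind_map]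

theorem Term.rename_agree {ρ ρ' : (s : L.Sorts) → ℕ → ℕ} (s : L.Sorts) (t : Term L s)
    (h : ∀ v ∈ Term.freeList s t, ρ v.1 v.2 = ρ' v.1 v.2) :
    Term.rename ρ s t = Term.rename ρ' s t := by
  induction t with
  | var n => simpa [Term.rename] using h ⟨_, n⟩ (by simp [Term.freeList])
  | func f args ih =>
    simp only [Term.rename]
    refine congrArg _ (funext fun i => ih i (fun v hv => h v ?_))
    simp only [Term.freeList, List.mem_flatMap]
    exact ⟨i, List.mem_finRange i, hv⟩

theorem mem_unbind_of_mem {s : L.Sorts} {l : List ((s : L.Sorts) × ℕ)}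
    {v : (s : L.Sorts) × ℕ} (hv : v ∈ l) (hne : ¬(v.1 = s ∧ v.2 = 0)) :
    (⟨v.1, if v.1 = s then v.2 - 1 else v.2⟩ : (s : L.Sorts) × ℕ) ∈ unbind s l := by
  unfold unbind
  refine List.mem_map.2 ⟨v, List.mem_filter.2 ⟨hv, by simp only [decide_eq_true_eq]; exact hne⟩, ?_⟩
  split <;> rfl

theorem Form.rename_agree {ρ ρ' : (s : L.Sorts) → ℕ → ℕ} (A : Form L)
    (h : ∀ v ∈ A.freeList, ρ v.1 v.2 = ρ' v.1 v.2) :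
    Form.rename ρ A = Form.rename ρ' A := by
  induction A generalizing ρ ρ' with
  | pred p args =>
    simp only [Form.rename]
    refine congrArg _ (funext fun i => Term.rename_agree _ (args i) (fun v hv => h v ?_))
    simp only [Form.freeList, List.mem_flatMap]
    exact ⟨i, List.mem_finRange i, hv⟩
  | bot => rfl
  | top => rfl
  | not A ih => simp only [Form.rename]; rw [ih h]
  | and A B ihA ihB =>
    simp only [Form.rename]
    rw [ihA (fun v hv => h v (by simp [Form.freeList, hv])),
        ihB (fun v hv => h v (by simp [Form.freeList, hv]))]
  | or A B ihA ihB =>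
    simp only [Form.rename]
    rw [ihA (fun v hv => h v (by simp [Form.freeList, hv])),
        ihB (fun v hv => h v (by simp [Form.freeList, hv]))]
  | imp A B ihA ihB =>
    simp only [Form.rename]
    rw [ihA (fun v hv => h v (by simp [Form.freeList, hv])),
        ihB (fun v hv => h v (by simp [Form.freeList, hv]))]
  | all s A ih =>
    simp only [Form.rename]
    rw [ih (fun v hv => ?_)]
    obtain ⟨s', n⟩ := v
    by_cases hs : s' = s
    · subst hs
      cases n with
      | zero => simp [liftRen]
      | succ n =>
        have := h ⟨s', n⟩ (by
          have := mem_unbind_of_mem (s := s') (v := ⟨s', n+1⟩) hv (by simp)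
          simpa [Form.freeList] using this)
        simp [liftRen, this]
    · have := h ⟨s', n⟩ (by
        have := mem_unbind_of_mem (s := s) (v := ⟨s', n⟩) hv (by simp [hs])
        simpa [Form.freeList, hs] using this)
      simp [liftRen, hs, this]
  | ex s A ih =>
    simp only [Form.rename]
    rw [ih (fun v hv => ?_)]
    obtain ⟨s', n⟩ := v
    by_cases hs : s' = s
    · subst hs
      cases n with
      | zero => simp [liftRen]
      | succ n =>
        have := h ⟨s', n⟩ (by
          have := mem_unbind_of_mem (s := s') (v := ⟨s', n+1⟩) hv (by simp)
          simpa [Form.freeList] using this)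
        simp [liftRen, this]
    · have := h ⟨s', n⟩ (by
        have := mem_unbind_of_mem (s := s) (v := ⟨s', n⟩) hv (by simp [hs])
        simpa [Form.freeList, hs] using this)
      simp [liftRen, hs, this]

theorem Form.rename_id (A : Form L) : Form.rename (fun _ n => n) A = A := by
  rw [Form.rename_eq_subst]
  exact Form.subst_id A

theorem Form.closed_rename {A : Form L} (h : A.freeList = [])
    (ρ : (s : L.Sorts) → ℕ → ℕ) : Form.rename ρ A = A := by
  rw [Form.rename_agree A (ρ' := fun _ n => n) (by simp [h]), Form.rename_id]

/-- The renaming underlying `Form.abstractVar`. -/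
def avRen (s : L.Sorts) (k : ℕ) : (s' : L.Sorts) → ℕ → ℕ :=
  fun s' n => if s' = s then (if n = k then 0 else n + 1) else n

theorem abstractVar_eq (s : L.Sorts) (k : ℕ) (A : Form L) :
    Form.abstractVar s k A = .all s (Form.rename (avRen s k) A) := by
  rw [Form.rename_eq_subst]
  unfold Form.abstractVar
  congr 1
  congr 1
  funext s' n
  simp only [renS, avRen]
  split_ifs <;> rfl

theorem freeList_abstractVar (s : L.Sorts) (k : ℕ) (A : Form L) :
    (Form.abstractVar s k A).freeList =
      A.freeList.filter (fun v => decide ¬(v.1 = s ∧ v.2 = k)) := by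
  rw [abstractVar_eq]
  show unbind s (Form.rename (avRen s k) A).freeList = _
  rw [Form.freeList_rename]
  generalize A.freeList = l
  induction l with
  | nil => rfl
  | cons v l ih =>
    obtain ⟨s', n⟩ := v
    by_cases hs : s' = s
    · subst hs
      by_cases hn : n = k
      · subst hn
        simpa [unbind, avRen, List.filter_cons] using ih
      · simpa [unbind, avRen, hn, List.filter_cons] using ih
    · simpa [unbind, avRen, hs, List.filter_cons] using ih

theorem closeSteps_freeList : ∀ (k : ℕ) (A : Form L),
    A.freeList.length ≤ k → (closeSteps k A).freeList = [] := by
  intro k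
  induction k with
  | zero => intro A hA; rw [closeSteps]; exact List.eq_nil_of_length_eq_zero (Nat.le_zero.1 hA)
  | succ k ih =>
    intro A hA
    rw [closeSteps]
    rcases hfl : A.freeList with _ | ⟨v, rest⟩
    · exact hfl
    · refine ih _ ?_
      rw [freeList_abstractVar, hfl, List.filter_cons]
      have hcond : ¬((decide ¬(v.1 = v.1 ∧ v.2 = v.2) : Bool) = true) := by simp
      rw [if_neg hcond]
      calc (rest.filter _).length ≤ rest.length := List.length_filter_le _ _
        _ ≤ k := by have := hA; rw [hfl] at this; simpa using this

theorem univClosure_freeList (A : Form L) : (univClosure A).freeList = [] :=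
  closeSteps_freeList _ _ le_rfl

theorem univClosure_shift (s : L.Sorts) (A : Form L) :
    Form.shift s (univClosure A) = univClosure A :=
  Form.closed_rename (univClosure_freeList A) _

/-! ### Infrastructure: rewriting is closed under substitution -/

theorem EqE.substC {rs : PRS L} {s : L.Sorts} {t u : Term L s} (h : EqE rs s t u)
    (σ : (s : L.Sorts) → ℕ → Term L s) :
    EqE rs s (Term.subst σ s t) (Term.subst σ s u) := by
  induction h with
  | base σ₀ h =>
    rw [Term.subst_comp, Term.subst_comp]
    exact EqE.base _ h
  | refl t => exact EqE.refl _
  | symm _ ih => exact ih.symm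
  | trans _ _ ih₁ ih₂ => exact ih₁.trans ih₂
  | congr f h ih => exact EqE.congr f ih

theorem RwNeg.substC {rs : PRS L} {A B : Form L} (h : RwNeg rs A B)
    (σ : (s : L.Sorts) → ℕ → Term L s) : RwNeg rs (A.subst σ) (B.subst σ) :=
  RwNeg.rec (motive_1 := fun A B _ => ∀ σ, RwNeg rs (A.subst σ) (B.subst σ))
    (motive_2 := fun A B _ => ∀ σ, RwPos rs (A.subst σ) (B.subst σ))
    (fun p _ _ i he hj σ =>
      RwNeg.predArg p _ _ i (he.substC σ) (fun j hij => congrArg _ (hj j hij)))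
    (fun σ₀ h σ => by
      rw [Form.subst_comp, Form.subst_comp]; exact RwNeg.rule _ h)
    (fun _ ih σ => RwNeg.notC (ih σ))
    (fun _ ih σ => RwNeg.andL (ih σ))
    (fun _ ih σ => RwNeg.andR (ih σ))
    (fun _ ih σ => RwNeg.orL (ih σ))
    (fun _ ih σ => RwNeg.orR (ih σ))
    (fun _ ih σ => RwNeg.impL (ih σ))
    (fun _ ih σ => RwNeg.impR (ih σ))
    (fun _ ih σ => RwNeg.allC (ih _))
    (fun _ ih σ => RwNeg.exC (ih _))
    (fun p _ _ i he hj σ =>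
      RwPos.predArg p _ _ i (he.substC σ) (fun j hij => congrArg _ (hj j hij)))
    (fun σ₀ h σ => by
      rw [Form.subst_comp, Form.subst_comp]; exact RwPos.rule _ h)
    (fun _ ih σ => RwPos.notC (ih σ))
    (fun _ ih σ => RwPos.andL (ih σ))
    (fun _ ih σ => RwPos.andR (ih σ))
    (fun _ ih σ => RwPos.orL (ih σ))
    (fun _ ih σ => RwPos.orR (ih σ))
    (fun _ ih σ => RwPos.impL (ih σ))
    (fun _ ih σ => RwPos.impR (ih σ))
    (fun _ ih σ => RwPos.allC (ih _))
    (fun _ ih σ => RwPos.exC (ih _))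
    h σ

theorem RwPos.substC {rs : PRS L} {A B : Form L} (h : RwPos rs A B)
    (σ : (s : L.Sorts) → ℕ → Term L s) : RwPos rs (A.subst σ) (B.subst σ) :=
  RwPos.rec (motive_1 := fun A B _ => ∀ σ, RwNeg rs (A.subst σ) (B.subst σ))
    (motive_2 := fun A B _ => ∀ σ, RwPos rs (A.subst σ) (B.subst σ))
    (fun p _ _ i he hj σ =>
      RwNeg.predArg p _ _ i (he.substC σ) (fun j hij => congrArg _ (hj j hij)))
    (fun σ₀ h σ => by
      rw [Form.subst_comp, Form.subst_comp]; exact RwNeg.rule _ h)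
    (fun _ ih σ => RwNeg.notC (ih σ))
    (fun _ ih σ => RwNeg.andL (ih σ))
    (fun _ ih σ => RwNeg.andR (ih σ))
    (fun _ ih σ => RwNeg.orL (ih σ))
    (fun _ ih σ => RwNeg.orR (ih σ))
    (fun _ ih σ => RwNeg.impL (ih σ))
    (fun _ ih σ => RwNeg.impR (ih σ))
    (fun _ ih σ => RwNeg.allC (ih _))
    (fun _ ih σ => RwNeg.exC (ih _))
    (fun p _ _ i he hj σ =>
      RwPos.predArg p _ _ i (he.substC σ) (fun j hij => congrArg _ (hj j hij)))
    (fun σ₀ h σ => by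
      rw [Form.subst_comp, Form.subst_comp]; exact RwPos.rule _ h)
    (fun _ ih σ => RwPos.notC (ih σ))
    (fun _ ih σ => RwPos.andL (ih σ))
    (fun _ ih σ => RwPos.andR (ih σ))
    (fun _ ih σ => RwPos.orL (ih σ))
    (fun _ ih σ => RwPos.orR (ih σ))
    (fun _ ih σ => RwPos.impL (ih σ))
    (fun _ ih σ => RwPos.impR (ih σ))
    (fun _ ih σ => RwPos.allC (ih _))
    (fun _ ih σ => RwPos.exC (ih _))
    h σ

theorem RwNegS.substC {rs : PRS L} {A B : Form L} (h : RwNegS rs A B)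
    (σ : (s : L.Sorts) → ℕ → Term L s) : RwNegS rs (A.subst σ) (B.subst σ) := by
  induction h with
  | refl => exact Relation.ReflTransGen.refl
  | tail _ h2 ih => exact ih.tail (h2.substC σ)

theorem RwPosS.substC {rs : PRS L} {A B : Form L} (h : RwPosS rs A B)
    (σ : (s : L.Sorts) → ℕ → Term L s) : RwPosS rs (A.subst σ) (B.subst σ) := by
  induction h with
  | refl => exact Relation.ReflTransGen.refl
  | tail _ h2 ih => exact ih.tail (h2.substC σ)

/-! ### Infrastructure: substitutions and free variables -/

theorem Term.subst_agree {σ σ' : (s : L.Sorts) → ℕ → Term L s} (s : L.Sorts) (t : Term L s)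
    (h : ∀ v ∈ Term.freeList s t, σ v.1 v.2 = σ' v.1 v.2) :
    Term.subst σ s t = Term.subst σ' s t := by
  induction t with
  | var n => simpa [Term.subst] using h ⟨_, n⟩ (by simp [Term.freeList])
  | func f args ih =>
    simp only [Term.subst]
    refine congrArg _ (funext fun i => ih i (fun v hv => h v ?_))
    simp only [Term.freeList, List.mem_flatMap]
    exact ⟨i, List.mem_finRange i, hv⟩

theorem Form.subst_agree {σ σ' : (s : L.Sorts) → ℕ → Term L s} (A : Form L)
    (h : ∀ v ∈ A.freeList, σ v.1 v.2 = σ' v.1 v.2) :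
    Form.subst σ A = Form.subst σ' A := by
  induction A generalizing σ σ' with
  | pred p args =>
    simp only [Form.subst]
    refine congrArg _ (funext fun i => Term.subst_agree _ (args i) (fun v hv => h v ?_))
    simp only [Form.freeList, List.mem_flatMap]
    exact ⟨i, List.mem_finRange i, hv⟩
  | bot => rfl
  | top => rfl
  | not A ih => simp only [Form.subst]; rw [ih h]
  | and A B ihA ihB =>
    simp only [Form.subst]
    rw [ihA (fun v hv => h v (by simp [Form.freeList, hv])),
        ihB (fun v hv => h v (by simp [Form.freeList, hv]))]
  | or A B ihA ihB =>
    simp only [Form.subst]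
    rw [ihA (fun v hv => h v (by simp [Form.freeList, hv])),
        ihB (fun v hv => h v (by simp [Form.freeList, hv]))]
  | imp A B ihA ihB =>
    simp only [Form.subst]
    rw [ihA (fun v hv => h v (by simp [Form.freeList, hv])),
        ihB (fun v hv => h v (by simp [Form.freeList, hv]))]
  | all s A ih =>
    simp only [Form.subst]
    rw [ih (fun v hv => ?_)]
    obtain ⟨s', n⟩ := v
    by_cases hs : s' = s
    · subst hs
      cases n with
      | zero => simp [liftSubst]
      | succ n =>
        have := h ⟨s', n⟩ (by
          have := mem_unbind_of_mem (s := s') (v := ⟨s', n+1⟩) hv (by simp)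
          simpa [Form.freeList] using this)
        simp [liftSubst, this]
    · have := h ⟨s', n⟩ (by
        have := mem_unbind_of_mem (s := s) (v := ⟨s', n⟩) hv (by simp [hs])
        simpa [Form.freeList, hs] using this)
      simp [liftSubst, hs, this]
  | ex s A ih =>
    simp only [Form.subst]
    rw [ih (fun v hv => ?_)]
    obtain ⟨s', n⟩ := v
    by_cases hs : s' = s
    · subst hs
      cases n with
      | zero => simp [liftSubst]
      | succ n =>
        have := h ⟨s', n⟩ (by
          have := mem_unbind_of_mem (s := s') (v := ⟨s', n+1⟩) hv (by simp)
          simpa [Form.freeList] using this)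
        simp [liftSubst, this]
    · have := h ⟨s', n⟩ (by
        have := mem_unbind_of_mem (s := s) (v := ⟨s', n⟩) hv (by simp [hs])
        simpa [Form.freeList, hs] using this)
      simp [liftSubst, hs, this]

theorem Form.closed_subst {A : Form L} (h : A.freeList = [])
    (σ : (s : L.Sorts) → ℕ → Term L s) : Form.subst σ A = A := by
  rw [Form.subst_agree A (σ' := idS) (by simp [h]), Form.subst_id]

theorem subst0_rename_shift {s : L.Sorts} (t : Term L s) (s' : L.Sorts) (u : Term L s') :
    Term.subst (subst0 t) s' (Term.rename (shiftRen s) s' u) = u := by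
  rw [Term.rename_eq_subst, Term.subst_comp]
  have hc : compS (subst0 t) (renS (shiftRen s)) = idS := by
    funext s'' m
    by_cases h : s'' = s
    · subst h; simp [compS, renS, Term.subst, subst0, shiftRen, idS]
    · have h2 : ¬ s = s'' := fun h' => h h'.symm
      simp [compS, renS, Term.subst, subst0, shiftRen, idS, h, h2]
  rw [hc, Term.subst_id]

theorem RwNegS.renameC {rs : PRS L} {A B : Form L} (h : RwNegS rs A B)
    (ρ : (s : L.Sorts) → ℕ → ℕ) : RwNegS rs (A.rename ρ) (B.rename ρ) := by
  rw [Form.rename_eq_subst, Form.rename_eq_subst]; exact h.substC _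

theorem RwPosS.renameC {rs : PRS L} {A B : Form L} (h : RwPosS rs A B)
    (ρ : (s : L.Sorts) → ℕ → ℕ) : RwPosS rs (A.rename ρ) (B.rename ρ) := by
  rw [Form.rename_eq_subst, Form.rename_eq_subst]; exact h.substC _

theorem inst_var0_lift (s : L.Sorts) (A : Form L) :
    Form.inst (s := s) (.var 0) (Form.rename (liftRen s (shiftRen s)) A) = A := by
  rw [Form.rename_eq_subst]
  unfold Form.inst
  rw [Form.subst_comp]
  have hc : compS (subst0 (Term.var (s := s) 0)) (renS (liftRen s (shiftRen s))) = idS := by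
    funext s' n
    by_cases h : s' = s
    · subst h
      cases n with
      | zero => simp [compS, renS, Term.subst, subst0, liftRen, shiftRen, idS]
      | succ n => simp [compS, renS, Term.subst, subst0, liftRen, shiftRen, idS]
    · have h2 : ¬ s = s' := fun h' => h h'.symm
      simp [compS, renS, Term.subst, subst0, liftRen, shiftRen, idS, h, h2]
  rw [hc, Form.subst_id]

/-! ### Infrastructure: proof theory -/

theorem Provable.ofPf {rs : PRS L} {n : ℕ} {Γ Δ : Multiset (Form L)}
    (h : Pf rs true n Γ Δ) : Provable rs Γ Δ := ⟨n, h⟩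

theorem Provable.weakenL {rs : PRS L} {Γ Δ : Multiset (Form L)}
    (h : Provable rs Γ Δ) (Θ : Multiset (Form L)) : Provable rs (Γ + Θ) Δ := by
  induction Θ using Multiset.induction_on with
  | empty => simpa using h
  | cons a Θ ih =>
    obtain ⟨m, hm⟩ := ih
    exact ⟨m + 1, by rw [show Γ + (a ::ₘ Θ) = a ::ₘ (Γ + Θ) by simp [Multiset.add_cons]]
                     exact Pf.weakL hm⟩

theorem Provable.weakenR {rs : PRS L} {Γ Δ : Multiset (Form L)}
    (h : Provable rs Γ Δ) (Ξ : Multiset (Form L)) : Provable rs Γ (Δ + Ξ) := by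
  induction Ξ using Multiset.induction_on with
  | empty => simpa using h
  | cons a Ξ ih =>
    obtain ⟨m, hm⟩ := ih
    exact ⟨m + 1, by rw [show Δ + (a ::ₘ Ξ) = a ::ₘ (Δ + Ξ) by simp [Multiset.add_cons]]
                     exact Pf.weakR hm⟩

theorem Provable.weaken_cons {rs : PRS L} {A B : Form L} {Γ Δ : Multiset (Form L)}
    (h : Provable rs {A} {B}) : Provable rs (A ::ₘ Γ) (B ::ₘ Δ) := by
  have := (h.weakenL Γ).weakenR Δ
  rwa [show ({A} : Multiset (Form L)) + Γ = A ::ₘ Γ from Multiset.singleton_add A Γ,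
       show ({B} : Multiset (Form L)) + Δ = B ::ₘ Δ from Multiset.singleton_add B Δ] at this

/-- The generalized identity lemma: if `A` and `B` rewrite (negatively resp.
positively) to a common formula `C`, then `A ⊢ B`. -/
theorem pf_id {rs : PRS L} : ∀ (C A B : Form L) (Γ Δ : Multiset (Form L)),
    RwNegS rs A C → RwPosS rs B C → Provable rs (A ::ₘ Γ) (B ::ₘ Δ) := by
  intro C
  induction C with
  | pred p args =>
    intro A B Γ Δ hA hB
    exact Provable.weaken_cons ⟨1, Pf.ax (P := Form.pred p args) trivial hA hB⟩
  | bot =>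
    intro A B Γ Δ hA hB
    exact ⟨1, Pf.botL hA⟩
  | top =>
    intro A B Γ Δ hA hB
    exact ⟨1, Pf.topR hB⟩
  | not C ih =>
    intro A B Γ Δ hA hB
    obtain ⟨n, hn⟩ := ih C C Γ Δ Relation.ReflTransGen.refl Relation.ReflTransGen.refl
    refine ⟨n + 1 + 1, Pf.notL hA ?_⟩
    rw [Multiset.cons_swap]
    exact Pf.notR hB hn
  | and C₁ C₂ ihC₁ ihC₂ =>
    intro A B Γ Δ hA hB
    obtain ⟨n, hn⟩ := ihC₁ C₁ C₁ (C₂ ::ₘ Γ) Δ Relation.ReflTransGen.refl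
      Relation.ReflTransGen.refl
    obtain ⟨m, hm⟩ := ihC₂ C₂ C₂ (C₁ ::ₘ Γ) Δ Relation.ReflTransGen.refl
      Relation.ReflTransGen.refl
    rw [Multiset.cons_swap] at hm
    exact ⟨_, Pf.andL hA (Pf.andR hB hn hm)⟩
  | or C₁ C₂ ihC₁ ihC₂ =>
    intro A B Γ Δ hA hB
    obtain ⟨n, hn⟩ := ihC₁ C₁ C₁ Γ (C₂ ::ₘ Δ) Relation.ReflTransGen.refl
      Relation.ReflTransGen.refl
    obtain ⟨m, hm⟩ := ihC₂ C₂ C₂ Γ (C₁ ::ₘ Δ) Relation.ReflTransGen.refl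
      Relation.ReflTransGen.refl
    rw [Multiset.cons_swap] at hm
    exact ⟨_, Pf.orL hA (Pf.orR hB hn) (Pf.orR hB hm)⟩
  | imp C₁ C₂ ihC₁ ihC₂ =>
    intro A B Γ Δ hA hB
    obtain ⟨n, hn⟩ := ihC₁ C₁ C₁ Γ (C₂ ::ₘ Δ) Relation.ReflTransGen.refl
      Relation.ReflTransGen.refl
    rw [Multiset.cons_swap] at hn
    obtain ⟨m, hm⟩ := ihC₂ C₂ C₂ (C₁ ::ₘ Γ) Δ Relation.ReflTransGen.refl
      Relation.ReflTransGen.refl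
    rw [Multiset.cons_swap] at hm
    have p1 := Pf.impR hB hn
    rw [Multiset.cons_swap] at p1
    exact ⟨_, Pf.impL hA p1 (Pf.impR hB hm)⟩
  | all s C ih =>
    intro A B Γ Δ hA hB
    have hA' : RwNegS rs (Form.shift s A)
        (.all s (Form.rename (liftRen s (shiftRen s)) C)) := hA.renameC (shiftRen s)
    have h2 : RwNegS rs (Form.inst (s := s) (Term.var 0)
        (Form.rename (liftRen s (shiftRen s)) C)) C := by
      rw [inst_var0_lift]; exact Relation.ReflTransGen.refl
    obtain ⟨n, hn⟩ := ih C C (Multiset.map (Form.shift s) Γ) (Multiset.map (Form.shift s) Δ)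
      Relation.ReflTransGen.refl Relation.ReflTransGen.refl
    have p : Pf rs true (n+1) (Multiset.map (Form.shift s) (A ::ₘ Γ))
        (C ::ₘ Multiset.map (Form.shift s) Δ) := by
      rw [Multiset.map_cons]
      exact Pf.allL (t := Term.var 0) hA' h2 hn
    exact ⟨_, Pf.allR hB p⟩
  | ex s C ih =>
    intro A B Γ Δ hA hB
    have hB' : RwPosS rs (Form.shift s B)
        (.ex s (Form.rename (liftRen s (shiftRen s)) C)) := hB.renameC (shiftRen s)
    have h2 : RwPosS rs (Form.inst (s := s) (Term.var 0)
        (Form.rename (liftRen s (shiftRen s)) C)) C := by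
      rw [inst_var0_lift]; exact Relation.ReflTransGen.refl
    obtain ⟨n, hn⟩ := ih C C (Multiset.map (Form.shift s) Γ) (Multiset.map (Form.shift s) Δ)
      Relation.ReflTransGen.refl Relation.ReflTransGen.refl
    have p : Pf rs true (n+1) (C ::ₘ Multiset.map (Form.shift s) Γ)
        (Multiset.map (Form.shift s) (B ::ₘ Δ)) := by
      rw [Multiset.map_cons]
      exact Pf.exR (t := Term.var 0) hB' h2 hn
    exact ⟨_, Pf.exL hA p⟩

theorem subst_abstractVar (σ : (s : L.Sorts) → ℕ → Term L s) (s : L.Sorts) (j : ℕ)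
    (A : Form L) :
    Form.subst σ (Form.abstractVar s j A) =
      .all s (Form.subst (compS (liftSubst s σ) (renS (avRen s j))) A) := by
  rw [abstractVar_eq, Form.rename_eq_subst]
  show Form.all s (Form.subst (liftSubst s σ) (Form.subst (renS (avRen s j)) A)) = _
  rw [Form.subst_comp]

theorem inst_subst_abstract (σ : (s : L.Sorts) → ℕ → Term L s) (s : L.Sorts) (j : ℕ)
    (A : Form L) :
    Form.inst (σ s j) (Form.subst (compS (liftSubst s σ) (renS (avRen s j))) A) =
      Form.subst σ A := by
  unfold Form.inst
  rw [Form.subst_comp]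
  congr 1
  funext s' n
  by_cases h : s' = s
  · subst h
    by_cases hn : n = j
    · subst hn
      simp [compS, renS, Term.subst, avRen, liftSubst, subst0]
    · simp [compS, renS, Term.subst, avRen, liftSubst, hn, subst0_rename_shift]
  · simp [compS, renS, Term.subst, avRen, liftSubst, h, subst0_rename_shift]

/-- Instantiation of a universally closed formula on the left. -/
theorem pv_instCloseSteps {rs : PRS L} : ∀ (k : ℕ) (A : Form L)
    (σ : (s : L.Sorts) → ℕ → Term L s) (Γ Δ : Multiset (Form L)),
    A.freeList.length ≤ k →
    Provable rs ((Form.subst σ A) ::ₘ Γ) Δ → Provable rs ((closeSteps k A) ::ₘ Γ) Δ := by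
  intro k
  induction k with
  | zero =>
    intro A σ Γ Δ hlen h
    rw [closeSteps]
    rwa [Form.closed_subst (List.eq_nil_of_length_eq_zero (Nat.le_zero.1 hlen))] at h
  | succ k ih =>
    intro A σ Γ Δ hlen h
    rw [closeSteps]
    rcases hfl : A.freeList with _ | ⟨v, rest⟩
    · rwa [Form.closed_subst hfl] at h
    · refine ih _ σ Γ Δ ?_ ?_
      · rw [freeList_abstractVar, hfl, List.filter_cons]
        have hcond : ¬((decide ¬(v.1 = v.1 ∧ v.2 = v.2) : Bool) = true) := by simp
        rw [if_neg hcond]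
        calc (rest.filter _).length ≤ rest.length := List.length_filter_le _ _
          _ ≤ k := by have := hlen; rw [hfl] at this; simpa using this
      · rw [subst_abstractVar]
        obtain ⟨n, hn⟩ := h
        refine ⟨n+1, Pf.allL (t := σ v.1 v.2) Relation.ReflTransGen.refl ?_ hn⟩
        rw [inst_subst_abstract]
        exact Relation.ReflTransGen.refl

theorem pv_univ {rs : PRS L} {A : Form L} (σ : (s : L.Sorts) → ℕ → Term L s)
    {Γ Δ : Multiset (Form L)} (h : Provable rs ((Form.subst σ A) ::ₘ Γ) Δ) :
    Provable rs ((univClosure A) ::ₘ Γ) Δ :=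
  pv_instCloseSteps _ _ σ Γ Δ le_rfl h

/-- Proving a universal closure on the right. -/
theorem pv_close {rs : PRS L} {Γ : Multiset (Form L)}
    (hΓ : ∀ s, Multiset.map (Form.shift s) Γ = Γ) :
    ∀ (k : ℕ) (A : Form L),
    (∀ σ, Provable rs Γ {Form.subst σ A}) → Provable rs Γ {closeSteps k A} := by
  intro k
  induction k with
  | zero =>
    intro A h
    rw [closeSteps]
    simpa [Form.subst_id] using h idS
  | succ k ih =>
    intro A h
    rw [closeSteps]
    rcases hfl : A.freeList with _ | ⟨v, rest⟩
    · simpa [Form.subst_id] using h idS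
    · refine ih _ (fun σ => ?_)
      rw [subst_abstractVar]
      obtain ⟨n, hn⟩ := h (compS (liftSubst v.1 σ) (renS (avRen v.1 v.2)))
      refine ⟨n+1, Pf.allR Relation.ReflTransGen.refl ?_⟩
      rw [hΓ v.1]
      simpa using hn

theorem pv_closure {rs : PRS L} {Γ : Multiset (Form L)}
    (hΓ : ∀ s, Multiset.map (Form.shift s) Γ = Γ) (A : Form L)
    (h : ∀ σ, Provable rs Γ {Form.subst σ A}) : Provable rs Γ {univClosure A} :=
  pv_close hΓ _ A h

/-! ### Infrastructure: lemmas about `ProvableIn` -/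

section PIsec

variable {rs : PRS L} {T : Set (Form L)} {Γ Δ : Multiset (Form L)} {A B C X Y Z : Form L}

theorem PI.ofPv (h : Provable rs Γ Δ) : ProvableIn rs T Γ Δ :=
  ⟨0, by simp, by simpa using h⟩

theorem PI.id (hA : RwNegS rs A C) (hB : RwPosS rs B C) :
    ProvableIn rs T (A ::ₘ Γ) (B ::ₘ Δ) :=
  PI.ofPv (pf_id C A B Γ Δ hA hB)

theorem PI.idRefl : ProvableIn rs T (A ::ₘ Γ) (A ::ₘ Δ) :=
  PI.id Relation.ReflTransGen.refl Relation.ReflTransGen.refl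

theorem PI.merge2 {Γ₁ Δ₁ Γ₂ Δ₂ : Multiset (Form L)}
    (h1 : ProvableIn rs T Γ₁ Δ₁) (h2 : ProvableIn rs T Γ₂ Δ₂) :
    ∃ T' : Multiset (Form L), (∀ C ∈ T', C ∈ T) ∧
      Provable rs (Γ₁ + T') Δ₁ ∧ Provable rs (Γ₂ + T') Δ₂ := by
  obtain ⟨T₁, m₁, p₁⟩ := h1
  obtain ⟨T₂, m₂, p₂⟩ := h2
  refine ⟨T₁ + T₂, fun C hC => ?_, ?_, ?_⟩
  · rcases Multiset.mem_add.1 hC with h | h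
    exacts [m₁ _ h, m₂ _ h]
  · have := p₁.weakenL T₂; rwa [add_assoc] at this
  · have := p₂.weakenL T₁
    rwa [add_assoc, add_comm T₂ T₁] at this

theorem PI.cut (h1 : ProvableIn rs T Γ (A ::ₘ Δ)) (h2 : ProvableIn rs T (A ::ₘ Γ) Δ) :
    ProvableIn rs T Γ Δ := by
  obtain ⟨T', m, p₁, p₂⟩ := PI.merge2 h1 h2
  refine ⟨T', m, ?_⟩
  rw [Multiset.cons_add] at p₂
  obtain ⟨n, pn⟩ := p₁
  obtain ⟨k, pk⟩ := p₂
  exact ⟨_, Pf.cut rfl Relation.ReflTransGen.refl Relation.ReflTransGen.refl pk pn⟩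

theorem PI.useAx (hA : A ∈ T) (h : ProvableIn rs T (A ::ₘ Γ) Δ) : ProvableIn rs T Γ Δ := by
  obtain ⟨T', m, p⟩ := h
  refine ⟨A ::ₘ T', fun C hC => ?_, ?_⟩
  · rcases Multiset.mem_cons.1 hC with h | h
    · exact h ▸ hA
    · exact m _ h
  · rwa [Multiset.cons_add, ← Multiset.add_cons] at p

theorem PI.weakenL (h : ProvableIn rs T Γ Δ) (Θ : Multiset (Form L)) :
    ProvableIn rs T (Γ + Θ) Δ := by
  obtain ⟨T', m, p⟩ := h
  exact ⟨T', m, by have := p.weakenL Θ; rwa [add_assoc, add_comm T' Θ, ← add_assoc] at this⟩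

theorem PI.weakenR (h : ProvableIn rs T Γ Δ) (Ξ : Multiset (Form L)) :
    ProvableIn rs T Γ (Δ + Ξ) := by
  obtain ⟨T', m, p⟩ := h
  exact ⟨T', m, p.weakenR Ξ⟩

theorem PI.weakL1 (h : ProvableIn rs T Γ Δ) : ProvableIn rs T (A ::ₘ Γ) Δ := by
  have := PI.weakenL h {A}
  rwa [add_comm, Multiset.singleton_add] at this

theorem PI.weakR1 (h : ProvableIn rs T Γ Δ) : ProvableIn rs T Γ (A ::ₘ Δ) := by
  have := PI.weakenR h {A}
  rwa [add_comm, Multiset.singleton_add] at this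

theorem PI.impR (h : ProvableIn rs T (X ::ₘ Γ) (Y ::ₘ Δ)) :
    ProvableIn rs T Γ ((X.imp Y) ::ₘ Δ) := by
  obtain ⟨T', m, n, p⟩ := h
  rw [Multiset.cons_add] at p
  exact ⟨T', m, _, Pf.impR Relation.ReflTransGen.refl p⟩

theorem PI.impL (h1 : ProvableIn rs T Γ (X ::ₘ Δ)) (h2 : ProvableIn rs T (Y ::ₘ Γ) Δ) :
    ProvableIn rs T ((X.imp Y) ::ₘ Γ) Δ := by
  obtain ⟨T', m, p₁, p₂⟩ := PI.merge2 h1 h2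
  rw [Multiset.cons_add] at p₂
  obtain ⟨n, pn⟩ := p₁
  obtain ⟨k, pk⟩ := p₂
  exact ⟨T', m, _, by rw [Multiset.cons_add]
                      exact Pf.impL Relation.ReflTransGen.refl pn pk⟩

theorem PI.notR (h : ProvableIn rs T (X ::ₘ Γ) Δ) :
    ProvableIn rs T Γ ((Form.not X) ::ₘ Δ) := by
  obtain ⟨T', m, n, p⟩ := h
  rw [Multiset.cons_add] at p
  exact ⟨T', m, _, Pf.notR Relation.ReflTransGen.refl p⟩

theorem PI.notL (h : ProvableIn rs T Γ (X ::ₘ Δ)) :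
    ProvableIn rs T ((Form.not X) ::ₘ Γ) Δ := by
  obtain ⟨T', m, n, p⟩ := h
  exact ⟨T', m, _, by rw [Multiset.cons_add]
                      exact Pf.notL Relation.ReflTransGen.refl p⟩

theorem PI.andR (h1 : ProvableIn rs T Γ (X ::ₘ Δ)) (h2 : ProvableIn rs T Γ (Y ::ₘ Δ)) :
    ProvableIn rs T Γ ((X.and Y) ::ₘ Δ) := by
  obtain ⟨T', m, p₁, p₂⟩ := PI.merge2 h1 h2
  obtain ⟨n, pn⟩ := p₁
  obtain ⟨k, pk⟩ := p₂
  exact ⟨T', m, _, Pf.andR Relation.ReflTransGen.refl pn pk⟩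

theorem PI.topR : ProvableIn rs T Γ (Form.top ::ₘ Δ) :=
  ⟨0, by simp, _, by rw [add_zero]; exact Pf.topR Relation.ReflTransGen.refl⟩

theorem PI.impE (h : ProvableIn rs T 0 {X.imp Y}) :
    ProvableIn rs T (X ::ₘ Γ) (Y ::ₘ Δ) := by
  have h1 : ProvableIn rs T (X ::ₘ Γ) ((X.imp Y) ::ₘ Y ::ₘ Δ) := by
    have := PI.weakenR (PI.weakenL h (X ::ₘ Γ)) (Y ::ₘ Δ)
    rwa [zero_add, show ({X.imp Y} : Multiset (Form L)) + (Y ::ₘ Δ) =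
      (X.imp Y) ::ₘ Y ::ₘ Δ from Multiset.singleton_add _ _] at this
  have h2 : ProvableIn rs T ((X.imp Y) ::ₘ X ::ₘ Γ) (Y ::ₘ Δ) := by
    exact PI.impL PI.idRefl PI.idRefl
  exact PI.cut h1 h2

theorem PI.impTrans (h1 : ProvableIn rs T 0 {X.imp Y}) (h2 : ProvableIn rs T 0 {Y.imp Z}) :
    ProvableIn rs T 0 {X.imp Z} := by
  have : ProvableIn rs T (X ::ₘ 0) (Z ::ₘ 0) := by
    refine PI.cut (A := Y) ?_ ?_
    · exact PI.impE (Γ := (0 : Multiset (Form L))) (Δ := {Z}) h1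
    · exact PI.impE (Γ := ({X} : Multiset (Form L))) (Δ := (0 : Multiset (Form L))) h2
  exact PI.impR this

theorem PI.ofSingle (h : ProvableIn rs T 0 {X}) : ProvableIn rs T Γ (X ::ₘ Δ) := by
  have := PI.weakenR (PI.weakenL h Γ) Δ
  rwa [zero_add, Multiset.singleton_add] at this

theorem PI.andL (h : ProvableIn rs T (X ::ₘ Y ::ₘ Γ) Δ) :
    ProvableIn rs T ((X.and Y) ::ₘ Γ) Δ := by
  obtain ⟨T', m, n, p⟩ := h
  rw [Multiset.cons_add, Multiset.cons_add] at p
  exact ⟨T', m, _, by rw [Multiset.cons_add]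
                      exact Pf.andL Relation.ReflTransGen.refl p⟩

theorem PI.orR (h : ProvableIn rs T Γ (X ::ₘ Y ::ₘ Δ)) :
    ProvableIn rs T Γ ((X.or Y) ::ₘ Δ) := by
  obtain ⟨T', m, n, p⟩ := h
  exact ⟨T', m, _, Pf.orR Relation.ReflTransGen.refl p⟩

theorem PI.orL (h1 : ProvableIn rs T (X ::ₘ Γ) Δ) (h2 : ProvableIn rs T (Y ::ₘ Γ) Δ) :
    ProvableIn rs T ((X.or Y) ::ₘ Γ) Δ := by
  obtain ⟨T', m, p₁, p₂⟩ := PI.merge2 h1 h2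
  rw [Multiset.cons_add] at p₁ p₂
  obtain ⟨n, pn⟩ := p₁
  obtain ⟨k, pk⟩ := p₂
  exact ⟨T', m, _, by rw [Multiset.cons_add]
                      exact Pf.orL Relation.ReflTransGen.refl pn pk⟩

theorem PI.allL {s : L.Sorts} {t : Term L s} {B : Form L}
    (h1 : RwNegS rs X (.all s B)) (h2 : RwNegS rs (Form.inst t B) C)
    (h : ProvableIn rs T (C ::ₘ Γ) Δ) : ProvableIn rs T (X ::ₘ Γ) Δ := by
  obtain ⟨T', m, n, p⟩ := h
  rw [Multiset.cons_add] at p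
  exact ⟨T', m, _, by rw [Multiset.cons_add]
                      exact Pf.allL h1 h2 p⟩

theorem PI.exR {s : L.Sorts} {t : Term L s} {B : Form L}
    (h1 : RwPosS rs X (.ex s B)) (h2 : RwPosS rs (Form.inst t B) C)
    (h : ProvableIn rs T Γ (C ::ₘ Δ)) : ProvableIn rs T Γ (X ::ₘ Δ) := by
  obtain ⟨T', m, n, p⟩ := h
  exact ⟨T', m, _, Pf.exR h1 h2 p⟩

theorem PI.univ (σ : (s : L.Sorts) → ℕ → Term L s)
    (h : ProvableIn rs T ((Form.subst σ A) ::ₘ Γ) Δ) :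
    ProvableIn rs T ((univClosure A) ::ₘ Γ) Δ := by
  obtain ⟨T', m, p⟩ := h
  rw [Multiset.cons_add] at p
  refine ⟨T', m, ?_⟩
  rw [Multiset.cons_add]
  exact pv_univ σ p

theorem PI.allRgen {s : L.Sorts} {B : Form L}
    (hT : ∀ C ∈ T, ∀ s, Form.shift s C = C)
    (h : ProvableIn rs T (Γ.map (Form.shift s)) (B ::ₘ Δ.map (Form.shift s))) :
    ProvableIn rs T Γ ((.all s B) ::ₘ Δ) := by
  obtain ⟨T', m, n, p⟩ := h
  have hT' : T'.map (Form.shift s) = T' :=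
    (Multiset.map_congr rfl fun x hx => hT x (m x hx) s).trans (Multiset.map_id _)
  rw [show Γ.map (Form.shift s) + T' = (Γ + T').map (Form.shift s) by
    rw [Multiset.map_add, hT']] at p
  exact ⟨T', m, _, Pf.allR Relation.ReflTransGen.refl p⟩

theorem PI.exLgen {s : L.Sorts} {B : Form L}
    (hT : ∀ C ∈ T, ∀ s, Form.shift s C = C)
    (h : ProvableIn rs T (B ::ₘ Γ.map (Form.shift s)) (Δ.map (Form.shift s))) :
    ProvableIn rs T ((.ex s B) ::ₘ Γ) Δ := by
  obtain ⟨T', m, n, p⟩ := h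
  have hT' : T'.map (Form.shift s) = T' :=
    (Multiset.map_congr rfl fun x hx => hT x (m x hx) s).trans (Multiset.map_id _)
  rw [Multiset.cons_add, show Γ.map (Form.shift s) + T' = (Γ + T').map (Form.shift s) by
    rw [Multiset.map_add, hT']] at p
  exact ⟨T', m, _, by rw [Multiset.cons_add]
                      exact Pf.exL Relation.ReflTransGen.refl p⟩

theorem mono_not (h : ProvableIn rs T 0 {Y.imp X}) :
    ProvableIn rs T 0 {(Form.not X).imp (Form.not Y)} := by
  refine PI.impR ?_
  refine PI.notR ?_
  rw [Multiset.cons_swap]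
  refine PI.notL ?_
  exact PI.impE h

theorem mono_andL {X X' B : Form L} (h : ProvableIn rs T 0 {X.imp X'}) :
    ProvableIn rs T 0 {(X.and B).imp (X'.and B)} := by
  refine PI.impR (PI.andL (PI.andR ?_ ?_))
  · exact PI.impE h
  · rw [Multiset.cons_swap]; exact PI.idRefl

theorem mono_andR {A Y Y' : Form L} (h : ProvableIn rs T 0 {Y.imp Y'}) :
    ProvableIn rs T 0 {(A.and Y).imp (A.and Y')} := by
  refine PI.impR (PI.andL (PI.andR ?_ ?_))
  · exact PI.idRefl
  · rw [Multiset.cons_swap]; exact PI.impE h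

theorem mono_orL {X X' B : Form L} (h : ProvableIn rs T 0 {X.imp X'}) :
    ProvableIn rs T 0 {(X.or B).imp (X'.or B)} := by
  refine PI.impR (PI.orL (PI.orR ?_) (PI.orR ?_))
  · exact PI.impE h
  · rw [Multiset.cons_swap]; exact PI.idRefl

theorem mono_orR {A Y Y' : Form L} (h : ProvableIn rs T 0 {Y.imp Y'}) :
    ProvableIn rs T 0 {(A.or Y).imp (A.or Y')} := by
  refine PI.impR (PI.orL (PI.orR ?_) (PI.orR ?_))
  · exact PI.idRefl
  · rw [Multiset.cons_swap]; exact PI.impE h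

theorem mono_impL {X X' B : Form L} (h : ProvableIn rs T 0 {X'.imp X}) :
    ProvableIn rs T 0 {(X.imp B).imp (X'.imp B)} := by
  refine PI.impR (PI.impR ?_)
  rw [Multiset.cons_swap]
  refine PI.impL ?_ ?_
  · exact PI.impE h
  · exact PI.idRefl

theorem mono_impR {A Y Y' : Form L} (h : ProvableIn rs T 0 {Y.imp Y'}) :
    ProvableIn rs T 0 {(A.imp Y).imp (A.imp Y')} := by
  refine PI.impR (PI.impR ?_)
  rw [Multiset.cons_swap]
  refine PI.impL ?_ ?_
  · exact PI.idRefl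
  · exact PI.impE h

theorem mono_all {s : L.Sorts} {X Y : Form L}
    (hT : ∀ C ∈ T, ∀ s, Form.shift s C = C)
    (h : ProvableIn rs T 0 {X.imp Y}) :
    ProvableIn rs T 0 {(Form.all s X).imp (Form.all s Y)} := by
  refine PI.impR ?_
  refine PI.allRgen hT ?_
  simp only [Multiset.map_cons, Multiset.map_zero]
  refine PI.allL (t := Term.var 0) (B := Form.rename (liftRen s (shiftRen s)) X)
    (C := X) Relation.ReflTransGen.refl ?_ ?_
  · rw [inst_var0_lift]; exact Relation.ReflTransGen.refl
  · exact PI.impE h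

theorem mono_ex {s : L.Sorts} {X Y : Form L}
    (hT : ∀ C ∈ T, ∀ s, Form.shift s C = C)
    (h : ProvableIn rs T 0 {X.imp Y}) :
    ProvableIn rs T 0 {(Form.ex s X).imp (Form.ex s Y)} := by
  refine PI.impR ?_
  refine PI.exLgen hT ?_
  simp only [Multiset.map_cons, Multiset.map_zero]
  refine PI.exR (t := Term.var 0) (B := Form.rename (liftRen s (shiftRen s)) Y)
    (C := Y) Relation.ReflTransGen.refl ?_ ?_
  · rw [inst_var0_lift]; exact Relation.ReflTransGen.refl
  · exact PI.impE h

end PIsec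

/-! ### Infrastructure: equality reasoning in `withEq L` -/

section EqSec

variable {L0 : Language}

theorem eqForm_subst (σ : (s : (withEq L0).Sorts) → ℕ → Term (withEq L0) s)
    {s : L0.Sorts} (t u : Term (withEq L0) s) :
    Form.subst σ (eqForm t u) = eqForm (Term.subst σ s t) (Term.subst σ s u) := by
  unfold eqForm
  simp only [Form.subst]
  congr 1
  funext i
  match i with
  | ⟨0, _⟩ => rfl
  | ⟨1, _⟩ => rfl

theorem eqForm_rwPos {rs : PRS (withEq L0)} {s : L0.Sorts} {a b b' : Term (withEq L0) s}
    (h : EqE rs s b b') : RwPos rs (eqForm a b) (eqForm a b') :=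
  @RwPos.predArg (withEq L0) rs (Sum.inr s) (args2 a b) (args2 a b') ⟨1, Nat.one_lt_two⟩ h
    (fun j hj => match j with
      | ⟨0, _⟩ => rfl
      | ⟨1, _⟩ => absurd rfl hj)

/-- A substitution mapping even variables `2i` to `a i` and odd variables
`2i+1` to `b i`. -/
def pairSubst (l : List L.Sorts) (a b : (i : Fin l.length) → Term L (l.get i)) :
    (s : L.Sorts) → ℕ → Term L s :=
  fun s n =>
    if h : n / 2 < l.length then
      if h2 : l.get ⟨n / 2, h⟩ = s then
        (if n % 2 = 0 then h2 ▸ a ⟨n / 2, h⟩ else h2 ▸ b ⟨n / 2, h⟩)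
      else .var n
    else .var n

theorem pairSubst_even (l : List L.Sorts) (a b : (i : Fin l.length) → Term L (l.get i))
    (i : Fin l.length) : pairSubst l a b (l.get i) (2 * i.val) = a i := by
  have e : 2 * i.val / 2 = i.val := Nat.mul_div_cancel_left _ (by norm_num)
  have h : 2 * i.val / 2 < l.length := by rw [e]; exact i.isLt
  have hfin : (⟨2 * i.val / 2, h⟩ : Fin l.length) = i := Fin.ext e
  unfold pairSubst
  rw [dif_pos h]
  generalize hg : (⟨2 * i.val / 2, h⟩ : Fin l.length) = j
  obtain rfl : j = i := hg.symm.trans hfin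
  rw [dif_pos rfl]
  rw [if_pos (Nat.mul_mod_right 2 j.val)]

theorem pairSubst_odd (l : List L.Sorts) (a b : (i : Fin l.length) → Term L (l.get i))
    (i : Fin l.length) : pairSubst l a b (l.get i) (2 * i.val + 1) = b i := by
  have e : (2 * i.val + 1) / 2 = i.val := by omega
  have h : (2 * i.val + 1) / 2 < l.length := by rw [e]; exact i.isLt
  have hfin : (⟨(2 * i.val + 1) / 2, h⟩ : Fin l.length) = i := Fin.ext e
  unfold pairSubst
  rw [dif_pos h]
  generalize hg : (⟨(2 * i.val + 1) / 2, h⟩ : Fin l.length) = j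
  obtain rfl : j = i := hg.symm.trans hfin
  rw [dif_pos rfl]
  rw [if_neg (by omega : ¬(2 * j.val + 1) % 2 = 0)]

theorem subst0_here {s : L.Sorts} (t : Term L s) : subst0 t s 0 = t := by
  simp [subst0]

/-- A substitution mapping variables `0, 1` of sort `s` to `t, u`. -/
def sub01 {s : L.Sorts} (t u : Term L s) : (s' : L.Sorts) → ℕ → Term L s' :=
  fun s' n =>
    if h : s = s' then (if n = 0 then h ▸ t else if n = 1 then h ▸ u else .var n)
    else .var n

theorem sub01_0 {s : L.Sorts} (t u : Term L s) : sub01 t u s 0 = t := by simp [sub01]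
theorem sub01_1 {s : L.Sorts} (t u : Term L s) : sub01 t u s 1 = u := by simp [sub01]

/-- A substitution mapping variables `0, 1, 2` of sort `s` to `t, u, v`. -/
def sub012 {s : L.Sorts} (t u v : Term L s) : (s' : L.Sorts) → ℕ → Term L s' :=
  fun s' n =>
    if h : s = s' then
      (if n = 0 then h ▸ t else if n = 1 then h ▸ u else if n = 2 then h ▸ v else .var n)
    else .var n

theorem sub012_0 {s : L.Sorts} (t u v : Term L s) : sub012 t u v s 0 = t := by simp [sub012]
theorem sub012_1 {s : L.Sorts} (t u v : Term L s) : sub012 t u v s 1 = u := by simp [sub012]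
theorem sub012_2 {s : L.Sorts} (t u v : Term L s) : sub012 t u v s 2 = v := by simp [sub012]

theorem Form.subst_imp {L : Language} (σ : (s : L.Sorts) → ℕ → Term L s) (A B : Form L) :
    Form.subst σ (A.imp B) = (Form.subst σ A).imp (Form.subst σ B) := rfl

theorem Form.subst_and {L : Language} (σ : (s : L.Sorts) → ℕ → Term L s) (A B : Form L) :
    Form.subst σ (A.and B) = (Form.subst σ A).and (Form.subst σ B) := rfl

theorem Form.subst_pred {L : Language} (σ : (s : L.Sorts) → ℕ → Term L s) (p : L.Pred)
    (args : (i : Fin (L.parity p).length) → Term L ((L.parity p).get i)) :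
    Form.subst σ (Form.pred p args) = Form.pred p (fun i => Term.subst σ _ (args i)) := rfl

theorem subst_var {L : Language} (σ : (s : L.Sorts) → ℕ → Term L s) (s : L.Sorts)
    (n : ℕ) : Term.subst σ s (.var n) = σ s n := rfl

theorem conj_fold {L : Language} {rs : PRS L} {T : Set (Form L)}
    {Γ Δ : Multiset (Form L)} {ι : Type} (F : ι → Form L) :
    ∀ (l : List ι), (∀ i ∈ l, ProvableIn rs T 0 {F i}) →
    ProvableIn rs T Γ ((l.foldr (fun i C => Form.and (F i) C) Form.top) ::ₘ Δ) := by
  intro l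
  induction l with
  | nil => intro _; exact PI.topR
  | cons i l ih =>
    intro h
    exact PI.andR (PI.ofSingle (h i List.mem_cons_self))
      (ih fun j hj => h j (List.mem_cons_of_mem _ hj))

theorem subst_congrFold (l : List L0.Sorts)
    (a b : (i : Fin l.length) → Term (withEq L0) (l.get i))
    (lst : List (Fin l.length)) :
    Form.subst (pairSubst (L := withEq L0) l a b)
      (lst.foldr (fun i C =>
        .and (eqForm (s := l.get i) (.var (2 * i.val)) (.var (2 * i.val + 1))) C) .top) =
    lst.foldr (fun i C => .and (eqForm (a i) (b i)) C) .top := by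
  induction lst with
  | nil => rfl
  | cons i lst ih =>
    simp only [List.foldr_cons, Form.subst]
    rw [ih]
    congr 1
    show Form.pred _ _ = eqForm (a i) (b i)
    unfold eqForm
    congr 1
    funext j
    match j with
    | ⟨0, _⟩ => exact pairSubst_even (L := withEq L0) l a b i
    | ⟨1, _⟩ => exact pairSubst_odd (L := withEq L0) l a b i

theorem URset_closed {rs : PRS (withEq L0)} :
    ∀ C ∈ URset rs, ∀ s, Form.shift s C = C := by
  intro C hC s
  rcases hC with ((hc | hc) | hc) | hc
  · rcases hc with (((⟨s', rfl⟩ | ⟨s', rfl⟩) | ⟨s', rfl⟩) | ⟨f, rfl⟩) | ⟨p, rfl⟩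
    · exact univClosure_shift _ _
    · exact univClosure_shift _ _
    · exact univClosure_shift _ _
    · exact univClosure_shift _ _
    · exact univClosure_shift _ _
  · rcases hc with ⟨s', t, u, _, rfl⟩; exact univClosure_shift _ _
  · rcases hc with ⟨P, A, _, rfl⟩; exact univClosure_shift _ _
  · rcases hc with ⟨P, A, _, rfl⟩; exact univClosure_shift _ _

/-- Provability of `t = u` in predicate logic from `U_R`, for `=_E`-congruent
terms. -/
theorem eq_prov {rs : PRS (withEq L0)} {s : (withEq L0).Sorts} {t u : Term (withEq L0) s}
    (h : EqE rs s t u) :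
    ProvableIn (emptyPRS (withEq L0)) (URset rs) 0 {eqForm (L := L0) (s := s) t u} := by
  induction h with
  | @base s' t' u' σ₀ hr =>
    refine PI.useAx (Or.inl (Or.inl (Or.inr ⟨s', t', u', hr, rfl⟩)))
      (PI.univ σ₀ ?_)
    erw [eqForm_subst]
    exact PI.idRefl
  | @refl s' t' =>
    refine PI.useAx (Or.inl (Or.inl (Or.inl (Or.inl (Or.inl (Or.inl (Or.inl ⟨s', rfl⟩)))))))
      (PI.univ (subst0 t') ?_)
    erw [eqForm_subst, subst_var, subst0_here]
    exact PI.idRefl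
  | @symm s' t' u' h ih =>
    refine PI.useAx (Or.inl (Or.inl (Or.inl (Or.inl (Or.inl (Or.inl (Or.inr ⟨s', rfl⟩)))))))
      (PI.univ (sub01 t' u') ?_)
    have e : Form.subst (sub01 t' u')
        ((eqForm (L := L0) (s := s') (Term.var 0) (Term.var 1)).imp (eqForm (L := L0) (s := s') (Term.var 1) (Term.var 0))) =
        (eqForm t' u').imp (eqForm u' t') := by
      erw [Form.subst_imp, eqForm_subst, eqForm_subst]
      simp only [subst_var, sub01_0, sub01_1]
    rw [e]
    exact PI.impL (PI.ofSingle ih) PI.idRefl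
  | @trans s' t' u' v' h1 h2 ih1 ih2 =>
    refine PI.useAx (Or.inl (Or.inl (Or.inl (Or.inl (Or.inl (Or.inr ⟨s', rfl⟩))))))
      (PI.univ (sub012 t' u' v') ?_)
    have e : Form.subst (sub012 t' u' v')
        ((Form.and (eqForm (L := L0) (s := s') (Term.var 0) (Term.var 1)) (eqForm (L := L0) (s := s') (Term.var 1) (Term.var 2))).imp
          (eqForm (L := L0) (s := s') (Term.var 0) (Term.var 2))) =
        (Form.and (eqForm t' u') (eqForm u' v')).imp (eqForm t' v') := by
      erw [Form.subst_imp, Form.subst_and, eqForm_subst, eqForm_subst, eqForm_subst]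
      simp only [subst_var, sub012_0, sub012_1, sub012_2]
    rw [e]
    exact PI.impL (PI.andR (PI.ofSingle ih1) (PI.ofSingle ih2)) PI.idRefl
  | @congr f args args' hargs ih =>
    refine PI.useAx (Or.inl (Or.inl (Or.inl (Or.inl (Or.inr ⟨f, rfl⟩)))))
      (PI.univ (pairSubst (L := withEq L0) (L0.arity f) args args') ?_)
    have e2 : Term.subst (pairSubst (L := withEq L0) (L0.arity f) args args') _
        (Term.func (L := withEq L0) f (fun i => Term.var (2 * i.val))) =
        Term.func (L := withEq L0) f args := by
      simp only [Term.subst]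
      exact congrArg _ (funext fun i => pairSubst_even _ args args' i)
    have e3 : Term.subst (pairSubst (L := withEq L0) (L0.arity f) args args') _
        (Term.func (L := withEq L0) f (fun i => Term.var (2 * i.val + 1))) =
        Term.func (L := withEq L0) f args' := by
      simp only [Term.subst]
      exact congrArg _ (funext fun i => pairSubst_odd _ args args' i)
    have e : Form.subst (pairSubst (L := withEq L0) (L0.arity f) args args')
        ((congrHypF (L := L0) f).imp
          (eqForm (L := L0) (Term.func (L := withEq L0) f fun i => Term.var (2 * i.val))
            (Term.func (L := withEq L0) f fun i => Term.var (2 * i.val + 1)))) =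
        (((List.finRange (L0.arity f).length).foldr
            (fun i C => Form.and (eqForm (L := L0) (args i) (args' i)) C) Form.top).imp
          (eqForm (L := L0) (Term.func (L := withEq L0) f args)
            (Term.func (L := withEq L0) f args'))) := by
      rw [Form.subst_imp]
      unfold congrHypF
      erw [subst_congrFold (L0 := L0) (L0.arity f) args args' _, eqForm_subst, e2, e3]
      rfl
    rw [e]
    exact PI.impL (conj_fold _ _ (fun i _ => ih i)) PI.idRefl

/-- Leibniz: congruent arguments give an implication between atomic
propositions, provably from `U_R`. -/
theorem pred_imp {rs : PRS (withEq L0)} (p : (withEq L0).Pred)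
    (a b : (i : Fin ((withEq L0).parity p).length) →
      Term (withEq L0) (((withEq L0).parity p).get i))
    (h : ∀ i, EqE rs _ (a i) (b i)) :
    ProvableIn (emptyPRS (withEq L0)) (URset rs) 0 {(Form.pred p a).imp (Form.pred p b)} := by
  refine PI.impR ?_
  refine PI.useAx (Or.inl (Or.inl (Or.inl (Or.inr ⟨p, rfl⟩))))
    (PI.univ (pairSubst (L := withEq L0) ((withEq L0).parity p) a b) ?_)
  have e2 : (Form.pred p fun i =>
      Term.subst (pairSubst (L := withEq L0) ((withEq L0).parity p) a b) _
        (Term.var (2 * i.val))) = Form.pred p a :=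
    congrArg _ (funext fun i => pairSubst_even _ a b i)
  have e3 : (Form.pred p fun i =>
      Term.subst (pairSubst (L := withEq L0) ((withEq L0).parity p) a b) _
        (Term.var (2 * i.val + 1))) = Form.pred p b :=
    congrArg _ (funext fun i => pairSubst_odd _ a b i)
  have e : Form.subst (pairSubst (L := withEq L0) ((withEq L0).parity p) a b)
      ((congrHypP p).imp
        ((Form.pred (L := withEq L0) p fun i => Term.var (2 * i.val)).imp
          (Form.pred (L := withEq L0) p fun i => Term.var (2 * i.val + 1)))) =
      (((List.finRange ((withEq L0).parity p).length).foldr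
          (fun i C => Form.and (eqForm (L := L0) (a i) (b i)) C) Form.top).imp
        ((Form.pred p a).imp (Form.pred p b))) := by
    rw [Form.subst_imp, Form.subst_imp, Form.subst_pred, Form.subst_pred]
    unfold congrHypP
    erw [subst_congrFold (L0 := L0) ((withEq L0).parity p) a b _, e2, e3]
    rfl
  rw [e]
  exact PI.impL (conj_fold _ _ (fun i _ => eq_prov (h i)))
    (PI.impL PI.idRefl PI.idRefl)

theorem eqe_all {rs : PRS (withEq L0)} {p : (withEq L0).Pred}
    {a a' : (i : Fin ((withEq L0).parity p).length) →
      Term (withEq L0) (((withEq L0).parity p).get i)}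
    (i : Fin ((withEq L0).parity p).length)
    (he : EqE rs _ (a i) (a' i)) (hj : ∀ j, j ≠ i → a j = a' j) :
    ∀ j, EqE rs _ (a j) (a' j) := by
  intro j
  by_cases hji : j = i
  · subst hji; exact he
  · rw [hj j hji]; exact EqE.refl _

theorem rule_neg {rs : PRS (withEq L0)} {P A₀ : Form (withEq L0)}
    (σ : (s : (withEq L0).Sorts) → ℕ → Term (withEq L0) s) (hr : rs.neg P A₀) :
    ProvableIn (emptyPRS (withEq L0)) (URset rs) 0
      {(Form.subst σ P).imp (Form.subst σ A₀)} := by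
  refine PI.impR ?_
  refine PI.useAx (Or.inl (Or.inr ⟨P, A₀, hr, rfl⟩)) (PI.univ σ ?_)
  rw [Form.subst_imp]
  exact PI.impL PI.idRefl PI.idRefl

theorem rule_pos {rs : PRS (withEq L0)} {P A₀ : Form (withEq L0)}
    (σ : (s : (withEq L0).Sorts) → ℕ → Term (withEq L0) s) (hr : rs.pos P A₀) :
    ProvableIn (emptyPRS (withEq L0)) (URset rs) 0
      {(Form.subst σ A₀).imp (Form.subst σ P)} := by
  refine PI.impR ?_
  refine PI.useAx (Or.inr ⟨P, A₀, hr, rfl⟩) (PI.univ σ ?_)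
  rw [Form.subst_imp]
  exact PI.impL PI.idRefl PI.idRefl

theorem rwNeg_imp {rs : PRS (withEq L0)} {A B : Form (withEq L0)} (h : RwNeg rs A B) :
    ProvableIn (emptyPRS (withEq L0)) (URset rs) 0 {A.imp B} :=
  RwNeg.rec
    (motive_1 := fun A B _ => ProvableIn (emptyPRS (withEq L0)) (URset rs) 0 {A.imp B})
    (motive_2 := fun A B _ => ProvableIn (emptyPRS (withEq L0)) (URset rs) 0 {B.imp A})
    (fun p a a' i he hj => pred_imp p a a' (eqe_all i he hj))
    (fun σ hr => rule_neg σ hr)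
    (fun _ ih => mono_not ih)
    (fun _ ih => mono_andL ih)
    (fun _ ih => mono_andR ih)
    (fun _ ih => mono_orL ih)
    (fun _ ih => mono_orR ih)
    (fun _ ih => mono_impL ih)
    (fun _ ih => mono_impR ih)
    (fun _ ih => mono_all URset_closed ih)
    (fun _ ih => mono_ex URset_closed ih)
    (fun p a a' i he hj => pred_imp p a' a (fun j => (eqe_all i he hj j).symm))
    (fun σ hr => rule_pos σ hr)
    (fun _ ih => mono_not ih)
    (fun _ ih => mono_andL ih)
    (fun _ ih => mono_andR ih)
    (fun _ ih => mono_orL ih)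
    (fun _ ih => mono_orR ih)
    (fun _ ih => mono_impL ih)
    (fun _ ih => mono_impR ih)
    (fun _ ih => mono_all URset_closed ih)
    (fun _ ih => mono_ex URset_closed ih)
    h

theorem rwPos_imp {rs : PRS (withEq L0)} {A B : Form (withEq L0)} (h : RwPos rs A B) :
    ProvableIn (emptyPRS (withEq L0)) (URset rs) 0 {B.imp A} :=
  RwPos.rec
    (motive_1 := fun A B _ => ProvableIn (emptyPRS (withEq L0)) (URset rs) 0 {A.imp B})
    (motive_2 := fun A B _ => ProvableIn (emptyPRS (withEq L0)) (URset rs) 0 {B.imp A})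
    (fun p a a' i he hj => pred_imp p a a' (eqe_all i he hj))
    (fun σ hr => rule_neg σ hr)
    (fun _ ih => mono_not ih)
    (fun _ ih => mono_andL ih)
    (fun _ ih => mono_andR ih)
    (fun _ ih => mono_orL ih)
    (fun _ ih => mono_orR ih)
    (fun _ ih => mono_impL ih)
    (fun _ ih => mono_impR ih)
    (fun _ ih => mono_all URset_closed ih)
    (fun _ ih => mono_ex URset_closed ih)
    (fun p a a' i he hj => pred_imp p a' a (fun j => (eqe_all i he hj j).symm))
    (fun σ hr => rule_pos σ hr)
    (fun _ ih => mono_not ih)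
    (fun _ ih => mono_andL ih)
    (fun _ ih => mono_andR ih)
    (fun _ ih => mono_orL ih)
    (fun _ ih => mono_orR ih)
    (fun _ ih => mono_impL ih)
    (fun _ ih => mono_impR ih)
    (fun _ ih => mono_all URset_closed ih)
    (fun _ ih => mono_ex URset_closed ih)
    h

theorem rwNegS_imp {rs : PRS (withEq L0)} {A B : Form (withEq L0)} (h : RwNegS rs A B) :
    ProvableIn (emptyPRS (withEq L0)) (URset rs) 0 {A.imp B} := by
  induction h with
  | refl => exact PI.impR PI.idRefl
  | tail _ h2 ih => exact PI.impTrans ih (rwNeg_imp h2)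

theorem rwPosS_imp {rs : PRS (withEq L0)} {A B : Form (withEq L0)} (h : RwPosS rs A B) :
    ProvableIn (emptyPRS (withEq L0)) (URset rs) 0 {B.imp A} := by
  induction h with
  | refl => exact PI.impR PI.idRefl
  | tail _ h2 ih => exact PI.impTrans (rwPos_imp h2) ih

end EqSec

/-- For a language `L` containing an equality predicate in
each sort and a polarized rewrite system `R` in `L`, the theory `⟨R, Eq⟩`
(`Eq` being the axioms of equality of `L`) is compatible with the set of
axioms `U_R`. -/
theorem compatible_URset (L0 : Language) (rs : PRS (withEq L0)) :
    Compatible rs (EqAxioms L0) (URset rs) := by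
  constructor
  · intro A B h
    exact rwNegS_imp h
  · intro A B h
    exact rwPosS_imp h
  · intro A hA
    exact PI.useAx (Or.inl (Or.inl (Or.inl hA))) PI.idRefl
  · intro A hA
    rcases hA with ((hc | hc) | hc) | hc
    · exact PI.useAx hc PI.idRefl
    · rcases hc with ⟨s, t, u, hr, rfl⟩
      refine ⟨{univClosure (eqForm (L := L0) (s := s) (.var 0) (.var 0))}, ?_, ?_⟩
      · intro C hC
        rw [Multiset.mem_singleton] at hC
        subst hC
        exact Or.inl (Or.inl (Or.inl (Or.inl ⟨s, rfl⟩)))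
      · rw [zero_add]
        refine pv_closure ?_ _ (fun σ => ?_)
        · intro s''
          rw [Multiset.map_singleton, univClosure_shift]
        · rw [eqForm_subst]
          refine pv_univ (subst0 (Term.subst σ s t)) ?_
          erw [eqForm_subst, subst_var, subst0_here]
          exact pf_id (eqForm (Term.subst σ s t) (Term.subst σ s t)) _ _ 0 0
            Relation.ReflTransGen.refl
            (Relation.ReflTransGen.single (eqForm_rwPos ((EqE.base σ hr).symm)))
    · rcases hc with ⟨P, A₀, hr, rfl⟩
      refine PI.ofPv ?_
      refine pv_closure (by simp) _ (fun σ => ?_)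
      rw [Form.subst_imp]
      obtain ⟨n, hn⟩ := pf_id (Form.subst σ A₀) (Form.subst σ P) (Form.subst σ A₀) 0 0
        (Relation.ReflTransGen.single (RwNeg.rule σ hr)) Relation.ReflTransGen.refl
      exact ⟨n + 1, Pf.impR Relation.ReflTransGen.refl hn⟩
    · rcases hc with ⟨P, A₀, hr, rfl⟩
      refine PI.ofPv ?_
      refine pv_closure (by simp) _ (fun σ => ?_)
      rw [Form.subst_imp]
      obtain ⟨n, hn⟩ := pf_id (Form.subst σ A₀) (Form.subst σ A₀) (Form.subst σ P) 0 0
        Relation.ReflTransGen.refl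
        (Relation.ReflTransGen.single (RwPos.rule σ hr))
      exact ⟨n + 1, Pf.impR Relation.ReflTransGen.refl hn⟩

end
end PDM
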